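/- arXiv:1912.10743 — 4 statements merged into one kernel-verified Lean document; each statement's English description precedes it below -/
import Mathlib

section
/- For every self-adjoint n×n matrix M over ℍ_ℂ, the Moore–Dyson quaternion determinant Qdet M is a scalar: Qdet M = conj(Qdet M), i.e., Qdet M lies in the subfield ℂ of ℍ_ℂ. -/
open Quaternion Matrix

/-- The complexified quaternions `ℍ_ℂ`. -/
abbrev HC : Type := QuaternionAlgebra ℂ (-1) 0 (-1)

/-- The factor of the Moore-Dyson quaternion determinant corresponding to the cycle of `σ`
through `x`, the cycle being written starting at `x`:
`M_{x, σx} M_{σx, σ²x} ⋯ M_{σ^{s-1}x, x}` where `s` is the length of the cycle. -/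
noncomputable def cycFac {n : ℕ} (M : Matrix (Fin n) (Fin n) HC) (σ : Equiv.Perm (Fin n))
    (x : Fin n) : HC :=
  ((List.range (orderOf (σ.cycleOf x))).map (fun t => M ((σ ^ t) x) ((σ ^ (t + 1)) x))).prod

open scoped Classical in
/-- The term `M_σ` of the Moore-Dyson quaternion determinant: the product over the cycles of `σ`,
each cycle starting at its largest element, the cycles being ordered by decreasing largest
element (cycles of length one are included). -/
noncomputable def permFac {n : ℕ} (M : Matrix (Fin n) (Fin n) HC) (σ : Equiv.Perm (Fin n)) : HC :=
  (((Finset.univ.filter (fun x : Fin n => ∀ y : Fin n, σ.SameCycle x y → y ≤ x)).sort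
      (· ≤ ·)).reverse.map (cycFac M σ)).prod

/-- The Moore-Dyson quaternion determinant `Qdet M = Σ_{σ ∈ S_n} sgn(σ) M_σ`. -/
noncomputable def Qdet {n : ℕ} (M : Matrix (Fin n) (Fin n) HC) : HC :=
  ∑ σ : Equiv.Perm (Fin n), ((Equiv.Perm.sign σ : ℤ) : HC) * permFac M σ

/-- A square quaternion matrix is self-adjoint if `M i j = conj (M j i)` for all `i, j`. -/
def IsSelfAdjointQ {n : ℕ} (M : Matrix (Fin n) (Fin n) HC) : Prop :=
  ∀ i j, M i j = star (M j i)

namespace QdetAux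
open Equiv
variable {n : ℕ}


variable {n : ℕ}

/-- flip the cycle of `x` inside `σ`. -/
def flip (σ : Perm (Fin n)) (x : Fin n) : Perm (Fin n) := σ * (σ.cycleOf x ^ 2)⁻¹

lemma commute_cycleOf (σ : Perm (Fin n)) (x : Fin n) : Commute σ (σ.cycleOf x) := by
  apply Equiv.ext
  intro y
  simp only [Equiv.Perm.mul_apply]
  by_cases h : σ.SameCycle x y
  · rw [h.cycleOf_apply, Equiv.Perm.SameCycle.cycleOf_apply
      (h.trans (Equiv.Perm.sameCycle_apply_right.mpr Equiv.Perm.SameCycle.rfl))]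
  · rw [Equiv.Perm.cycleOf_apply_of_not_sameCycle h,
      Equiv.Perm.cycleOf_apply_of_not_sameCycle (by simpa using h)]

lemma flip_zpow (σ : Perm (Fin n)) (x : Fin n) (i : ℤ) :
    (flip σ x) ^ i = σ ^ i * (σ.cycleOf x) ^ (-(2*i)) := by
  have hc : Commute σ ((σ.cycleOf x ^ 2)⁻¹) :=
    ((commute_cycleOf σ x).pow_right 2).inv_right
  rw [flip, hc.mul_zpow]
  congr 1
  rw [_root_.inv_zpow, ← zpow_natCast (σ.cycleOf x) 2, ← _root_.zpow_mul, ← _root_.zpow_neg]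
  norm_num

lemma flip_zpow_apply_same {σ : Perm (Fin n)} {x z : Fin n} (h : σ.SameCycle x z) (i : ℤ) :
    ((flip σ x) ^ i) z = (σ ^ (-i)) z := by
  rw [flip_zpow, Equiv.Perm.mul_apply, h.cycleOf_eq, Equiv.Perm.cycleOf_zpow_apply_self,
    ← Equiv.Perm.mul_apply, ← _root_.zpow_add]
  congr 1
  ring

lemma flip_zpow_apply_other {σ : Perm (Fin n)} {x z : Fin n} (h : ¬ σ.SameCycle x z) (i : ℤ) :
    ((flip σ x) ^ i) z = (σ ^ i) z := by
  rw [flip_zpow, Equiv.Perm.mul_apply,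
    Equiv.Perm.zpow_apply_eq_self_of_apply_eq_self (Equiv.Perm.cycleOf_apply_of_not_sameCycle h)]

lemma flip_sameCycle (σ : Perm (Fin n)) (x : Fin n) (a b : Fin n) :
    (flip σ x).SameCycle a b ↔ σ.SameCycle a b := by
  by_cases h : σ.SameCycle x a
  · constructor
    · rintro ⟨i, hi⟩
      exact ⟨-i, by rw [← flip_zpow_apply_same h i, hi]⟩
    · rintro ⟨i, hi⟩
      exact ⟨-i, by rw [flip_zpow_apply_same h, neg_neg, hi]⟩
  · constructor
    · rintro ⟨i, hi⟩
      exact ⟨i, by rw [← flip_zpow_apply_other h i, hi]⟩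
    · rintro ⟨i, hi⟩
      exact ⟨i, by rw [flip_zpow_apply_other h, hi]⟩

lemma flip_cycleOf_self (σ : Perm (Fin n)) (x : Fin n) :
    (flip σ x).cycleOf x = (σ.cycleOf x)⁻¹ := by
  rw [Equiv.Perm.cycleOf_inv]
  apply Equiv.ext
  intro y
  rw [Equiv.Perm.cycleOf_apply, Equiv.Perm.cycleOf_apply]
  by_cases h : σ.SameCycle x y
  · rw [if_pos ((flip_sameCycle σ x x y).mpr h), if_pos ((Equiv.Perm.sameCycle_inv).mpr h)]
    have := flip_zpow_apply_same h 1
    simpa using this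
  · rw [if_neg (fun hh => h ((flip_sameCycle σ x x y).mp hh)),
      if_neg (fun hh => h ((Equiv.Perm.sameCycle_inv).mp hh))]

lemma flip_cycleOf_other {σ : Perm (Fin n)} {x y : Fin n} (h : ¬ σ.SameCycle x y) :
    (flip σ x).cycleOf y = σ.cycleOf y := by
  apply Equiv.ext
  intro z
  rw [Equiv.Perm.cycleOf_apply, Equiv.Perm.cycleOf_apply]
  by_cases hz : σ.SameCycle y z
  · rw [if_pos ((flip_sameCycle σ x y z).mpr hz), if_pos hz]
    have hxz : ¬ σ.SameCycle x z := fun hh => h (hh.trans hz.symm)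
    have := flip_zpow_apply_other hxz 1
    simpa using this
  · rw [if_neg (fun hh => hz ((flip_sameCycle σ x y z).mp hh)), if_neg hz]

lemma flip_flip (σ : Perm (Fin n)) (x : Fin n) : flip (flip σ x) x = σ := by
  rw [flip, flip_cycleOf_self, flip]
  group

lemma flip_sign (σ : Perm (Fin n)) (x : Fin n) :
    Equiv.Perm.sign (flip σ x) = Equiv.Perm.sign σ := by
  rw [flip, _root_.map_mul, map_inv, map_pow, Int.units_sq, inv_one, mul_one]

lemma star_prod_range (s : ℕ) (f : ℕ → HC) :
    star ((List.range s).map f).prod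
      = ((List.range s).map (fun t => star (f (s - 1 - t)))).prod := by
  induction s generalizing f with
  | zero => simp
  | succ s ih =>
    conv_lhs => rw [List.range_succ]
    conv_rhs => rw [List.range_succ_eq_map]
    simp only [List.map_append, List.map_cons, List.prod_append, List.prod_cons,
      List.map_map, StarMul.star_mul, List.prod_nil, List.map_nil, mul_one]
    rw [ih f]
    congr 1
    apply congrArg List.prod
    apply List.map_congr_left
    intro t ht
    simp only [Function.comp]
    congr 2
    omega

lemma pow_sub_apply (σ : Perm (Fin n)) (x : Fin n) {s t : ℕ} (hs : (σ ^ s) x = x) (ht : t ≤ s) :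
    ((σ⁻¹) ^ t) x = (σ ^ (s - t)) x := by
  apply (σ ^ t).injective
  rw [inv_pow, Equiv.Perm.coe_inv, Equiv.apply_symm_apply, ← Equiv.Perm.mul_apply, ← pow_add]
  rw [show t + (s - t) = s by omega, hs]

lemma orderOf_pow_apply_self (σ : Perm (Fin n)) (x : Fin n) :
    (σ ^ (orderOf (σ.cycleOf x))) x = x := by
  rw [← Equiv.Perm.cycleOf_pow_apply_self, pow_orderOf_eq_one]
  rfl

/-- key: cycFac of the flipped permutation is the star of cycFac. -/
lemma cycFac_flip_self {M : Matrix (Fin n) (Fin n) HC} (hM : IsSelfAdjointQ M)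
    (σ : Perm (Fin n)) (x : Fin n) :
    cycFac M (flip σ x) x = star (cycFac M σ x) := by
  unfold cycFac
  rw [star_prod_range]
  rw [flip_cycleOf_self, orderOf_inv]
  set s := orderOf (σ.cycleOf x) with hsdef
  have hs : (σ ^ s) x = x := orderOf_pow_apply_self σ x
  apply congrArg List.prod
  apply List.map_congr_left
  intro t ht
  rw [List.mem_range] at ht
  have h1 : ((flip σ x) ^ t) x = (σ ^ (s - t)) x := by
    have := flip_zpow_apply_same (Equiv.Perm.SameCycle.rfl (f := σ) (x := x)) (t : ℤ)
    rw [zpow_natCast] at this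
    rw [this, _root_.zpow_neg, ← _root_.inv_zpow, zpow_natCast,
      pow_sub_apply σ x hs (le_of_lt ht)]
  have h2 : ((flip σ x) ^ (t+1)) x = (σ ^ (s - 1 - t)) x := by
    have := flip_zpow_apply_same (Equiv.Perm.SameCycle.rfl (f := σ) (x := x)) ((t+1) : ℤ)
    rw [show (((t:ℕ)+1 : ℤ)) = ((t+1 : ℕ) : ℤ) by push_cast; ring, zpow_natCast] at this
    rw [this, _root_.zpow_neg, ← _root_.inv_zpow, zpow_natCast,
      pow_sub_apply σ x hs (by omega), show s - (t+1) = s - 1 - t by omega]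
  rw [h1, h2]
  have := hM ((σ ^ (s - 1 - t)) x) ((σ ^ (s - 1 - t + 1)) x)
  rw [this, star_star, show s - 1 - t + 1 = s - t by omega]

lemma cycFac_flip_other {M : Matrix (Fin n) (Fin n) HC}
    {σ : Perm (Fin n)} {x y : Fin n} (h : ¬ σ.SameCycle x y) :
    cycFac M (flip σ x) y = cycFac M σ y := by
  unfold cycFac
  rw [flip_cycleOf_other h]
  apply congrArg List.prod
  apply List.map_congr_left
  intro t _
  have e : ∀ m : ℕ, ((flip σ x) ^ m) y = (σ ^ m) y := by
    intro m
    have := flip_zpow_apply_other h (m : ℤ)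
    rwa [zpow_natCast, zpow_natCast] at this
  rw [e, e]

open scoped Classical in
noncomputable def reps (σ : Perm (Fin n)) : Finset (Fin n) :=
  Finset.univ.filter (fun x : Fin n => ∀ y : Fin n, σ.SameCycle x y → y ≤ x)

lemma permFac_eq (M : Matrix (Fin n) (Fin n) HC) (σ : Perm (Fin n)) :
    permFac M σ = (((reps σ).sort (· ≤ ·)).reverse.map (cycFac M σ)).prod := rfl

open scoped Classical in
lemma mem_reps {σ : Perm (Fin n)} {x : Fin n} :
    x ∈ reps σ ↔ ∀ y : Fin n, σ.SameCycle x y → y ≤ x := by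
  simp [reps]

lemma reps_flip (σ : Perm (Fin n)) (x : Fin n) : reps (flip σ x) = reps σ := by
  ext z
  simp only [mem_reps, flip_sameCycle]

lemma reps_not_sameCycle {σ : Perm (Fin n)} {x y : Fin n}
    (hx : x ∈ reps σ) (hy : y ∈ reps σ) (hne : y ≠ x) : ¬ σ.SameCycle x y :=
  fun h => hne (le_antisymm (mem_reps.mp hx y h) (mem_reps.mp hy x h.symm))

lemma prod_split (L : List (Fin n)) (hnd : L.Nodup) {x₀ : Fin n} (hx : x₀ ∈ L)
    (f₀ : Fin n → HC) :
    ∃ P Q : HC, ∀ f : Fin n → HC, (∀ y ∈ L, y ≠ x₀ → f y = f₀ y) →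
      (L.map f).prod = P * f x₀ * Q := by
  obtain ⟨L₁, L₂, rfl⟩ := List.append_of_mem hx
  have h1 : x₀ ∉ L₁ := fun h =>
    (List.disjoint_of_nodup_append hnd) h List.mem_cons_self
  have h2 : x₀ ∉ L₂ := by
    have := (List.nodup_cons.mp (hnd.of_append_right)).1
    exact this
  refine ⟨(L₁.map f₀).prod, (L₂.map f₀).prod, ?_⟩
  intro f hf
  have e1 : L₁.map f = L₁.map f₀ :=
    List.map_congr_left (fun y hy => hf y (by simp [hy]) (fun h => h1 (h ▸ hy)))
  have e2 : L₂.map f = L₂.map f₀ :=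
    List.map_congr_left (fun y hy => hf y (by simp [hy]) (fun h => h2 (h ▸ hy)))
  rw [List.map_append, List.prod_append, List.map_cons, List.prod_cons, e1, e2, mul_assoc]

lemma add_self_inj {x y : HC} (h : x + x = y + y) : x = y := by
  ext
  · have := congrArg QuaternionAlgebra.re h
    simp only [QuaternionAlgebra.re_add] at this
    linear_combination this / 2
  · have := congrArg QuaternionAlgebra.imI h
    simp only [QuaternionAlgebra.imI_add] at this
    linear_combination this / 2
  · have := congrArg QuaternionAlgebra.imJ h
    simp only [QuaternionAlgebra.imJ_add] at this
    linear_combination this / 2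
  · have := congrArg QuaternionAlgebra.imK h
    simp only [QuaternionAlgebra.imK_add] at this
    linear_combination this / 2

noncomputable def fac (M : Matrix (Fin n) (Fin n) HC) (k : ℕ) (σ : Perm (Fin n))
    (x : Fin n) : HC :=
  if k ≤ (x : ℕ) then (((cycFac M σ x).re : ℂ) : HC) else cycFac M σ x

noncomputable def TT (M : Matrix (Fin n) (Fin n) HC) (k : ℕ) : HC :=
  ∑ σ : Perm (Fin n), ((Equiv.Perm.sign σ : ℤ) : HC) *
    (((reps σ).sort (· ≤ ·)).reverse.map (fac M k σ)).prod

lemma TT_top (M : Matrix (Fin n) (Fin n) HC) : TT M n = Qdet M := by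
  unfold TT Qdet
  refine Finset.sum_congr rfl (fun σ _ => ?_)
  rw [permFac_eq]
  congr 1
  apply congrArg List.prod
  apply List.map_congr_left
  intro y hy
  have : ¬ n ≤ (y : ℕ) := by omega
  simp [fac, this]

lemma TT_step (M : Matrix (Fin n) (Fin n) HC) (hM : IsSelfAdjointQ M) (k : ℕ) :
    TT M (k + 1) = TT M k := by
  by_cases hk : k < n
  · -- main case: k < n
    set x₀ : Fin n := ⟨k, hk⟩ with hx₀def
    have hx₀v : (x₀ : ℕ) = k := rfl
    set F : ℕ → Perm (Fin n) → HC := fun j σ => ((Equiv.Perm.sign σ : ℤ) : HC) *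
      (((reps σ).sort (· ≤ ·)).reverse.map (fac M j σ)).prod with hF
    have hTT : ∀ j, TT M j = ∑ σ : Perm (Fin n), F j σ := fun j => rfl
    classical
    rw [hTT, hTT,
      ← Finset.sum_filter_add_sum_filter_not Finset.univ (fun σ => x₀ ∈ reps σ) (F (k+1)),
      ← Finset.sum_filter_add_sum_filter_not Finset.univ (fun σ => x₀ ∈ reps σ) (F k)]
    congr 1
    · -- sum over permutations having x₀ as a cycle maximum
      set A := Finset.univ.filter (fun σ : Perm (Fin n) => x₀ ∈ reps σ) with hA
      have hmemA : ∀ σ ∈ A, x₀ ∈ reps σ := fun σ hσ => (Finset.mem_filter.mp hσ).2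
      have hflipA : ∀ σ ∈ A, flip σ x₀ ∈ A := by
        intro σ hσ
        rw [hA, Finset.mem_filter]
        exact ⟨Finset.mem_univ _, by rw [reps_flip]; exact hmemA σ hσ⟩
      have key : ∀ σ ∈ A, F (k+1) σ + F (k+1) (flip σ x₀) = F k σ + F k σ := by
        intro σ hσ
        have hx : x₀ ∈ reps σ := hmemA σ hσ
        set L := ((reps σ).sort (· ≤ ·)).reverse with hL
        have hnd : L.Nodup := List.nodup_reverse.mpr (Finset.sort_nodup _ _)
        have hxL : x₀ ∈ L := by rw [hL, List.mem_reverse, Finset.mem_sort]; exact hx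
        obtain ⟨P, Q, hPQ⟩ := prod_split L hnd hxL (fac M (k+1) σ)
        have hyne : ∀ y ∈ L, y ≠ x₀ → (y : ℕ) ≠ k := by
          intro y _ hy hyk
          exact hy (Fin.ext (by rw [hyk, hx₀v]))
        set a := cycFac M σ x₀ with ha
        set r : HC := ((a.re : ℂ) : HC) with hr
        have e1 : (L.map (fac M (k+1) σ)).prod = P * a * Q := by
          rw [hPQ _ (fun _ _ _ => rfl)]
          congr 2
          rw [fac, if_neg (by omega)]
        have e3 : (L.map (fac M k σ)).prod = P * r * Q := by
          rw [hPQ (fac M k σ) ?_]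
          · congr 2
            rw [fac, if_pos (by omega)]
          · intro y hyL hy
            have hyk := hyne y hyL hy
            rw [fac, fac]
            have : (k ≤ (y : ℕ)) ↔ (k + 1 ≤ (y : ℕ)) := by omega
            by_cases hc : k + 1 ≤ (y : ℕ)
            · rw [if_pos (this.mpr hc), if_pos hc]
            · rw [if_neg (fun hh => hc (this.mp hh)), if_neg hc]
        have e2 : (L.map (fac M (k+1) (flip σ x₀))).prod = P * star a * Q := by
          rw [hPQ (fac M (k+1) (flip σ x₀)) ?_]
          · congr 2
            rw [fac, if_neg (by omega), cycFac_flip_self hM]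
          · intro y hyL hy
            have hnc : ¬ σ.SameCycle x₀ y := by
              apply reps_not_sameCycle hx _ hy
              rw [hL, List.mem_reverse, Finset.mem_sort] at hyL
              exact hyL
            rw [fac, fac, cycFac_flip_other hnc]
        have hab : a + star a = r + r := by
          rw [QuaternionAlgebra.self_add_star', two_mul, zero_mul, add_zero, QuaternionAlgebra.coe_add]
        have harith : P * a * Q + P * star a * Q = P * r * Q + P * r * Q := by
          rw [mul_assoc P a Q, mul_assoc P (star a) Q, mul_assoc P r Q,
            ← mul_add, ← mul_add, ← add_mul, ← add_mul, hab]
        have hsgn : ((Equiv.Perm.sign (flip σ x₀) : ℤ) : HC) = ((Equiv.Perm.sign σ : ℤ) : HC) := by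
          rw [flip_sign]
        rw [hF]
        dsimp only
        rw [hsgn, reps_flip, ← hL, e1, e2, e3, ← mul_add, ← mul_add, harith]
      have reidx : ∑ σ ∈ A, F (k+1) (flip σ x₀) = ∑ σ ∈ A, F (k+1) σ :=
        Finset.sum_nbij' (fun σ => flip σ x₀) (fun σ => flip σ x₀) hflipA hflipA
          (fun σ _ => flip_flip σ x₀) (fun σ _ => flip_flip σ x₀) (fun σ _ => rfl)
      apply add_self_inj
      calc (∑ σ ∈ A, F (k+1) σ) + ∑ σ ∈ A, F (k+1) σ
          = (∑ σ ∈ A, F (k+1) σ) + ∑ σ ∈ A, F (k+1) (flip σ x₀) := by rw [reidx]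
        _ = ∑ σ ∈ A, (F (k+1) σ + F (k+1) (flip σ x₀)) := by rw [Finset.sum_add_distrib]
        _ = ∑ σ ∈ A, (F k σ + F k σ) := Finset.sum_congr rfl key
        _ = (∑ σ ∈ A, F k σ) + ∑ σ ∈ A, F k σ := by rw [Finset.sum_add_distrib]
    · -- sum over permutations not having x₀ as a cycle maximum
      refine Finset.sum_congr rfl (fun σ hσ => ?_)
      have hσ' : x₀ ∉ reps σ := by
        rw [Finset.mem_filter] at hσ
        exact hσ.2
      rw [hF]
      dsimp only
      congr 1
      apply congrArg List.prod
      apply List.map_congr_left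
      intro y hy
      have hyr : y ∈ reps σ := by
        rw [List.mem_reverse, Finset.mem_sort] at hy
        exact hy
      have hyk : (y : ℕ) ≠ k := by
        intro hyk
        have hyx : y = x₀ := Fin.ext (by rw [hyk])
        rw [hyx] at hyr
        exact hσ' hyr
      rw [fac, fac]
      have : (k ≤ (y : ℕ)) ↔ (k + 1 ≤ (y : ℕ)) := by omega
      by_cases hc : k + 1 ≤ (y : ℕ)
      · rw [if_pos (this.mpr hc), if_pos hc]
      · rw [if_neg (fun hh => hc (this.mp hh)), if_neg hc]
  · unfold TT
    refine Finset.sum_congr rfl (fun σ _ => ?_)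
    congr 1
    apply congrArg List.prod
    apply List.map_congr_left
    intro y hy
    have h1 : ¬ k ≤ (y : ℕ) := by omega
    have h2 : ¬ k + 1 ≤ (y : ℕ) := by omega
    simp [fac, h1, h2]


lemma TT_zero (M : Matrix (Fin n) (Fin n) HC) :
    ∃ c : ℂ, TT M 0 = algebraMap ℂ HC c := by
  refine ⟨∑ σ : Perm (Fin n), ((Equiv.Perm.sign σ : ℤ) : ℂ) *
    (((reps σ).sort (· ≤ ·)).reverse.map (fun x => (cycFac M σ x).re)).prod, ?_⟩
  rw [map_sum]
  refine Finset.sum_congr rfl (fun σ _ => ?_)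
  rw [_root_.map_mul, map_intCast, map_list_prod]
  congr 1
  rw [List.map_map]
  apply congrArg List.prod
  apply List.map_congr_left
  intro y hy
  simp only [Function.comp, fac, Nat.zero_le, if_true, QuaternionAlgebra.coe_algebraMap]

end QdetAux

theorem statement4 (n : ℕ) (M : Matrix (Fin n) (Fin n) HC) (hM : IsSelfAdjointQ M) :
    star (Qdet M) = Qdet M ∧ ∃ c : ℂ, Qdet M = algebraMap ℂ HC c := by
  open QdetAux in
  have hstep : ∀ k, TT M k = TT M 0 := by
    intro k
    induction k with
    | zero => rfl
    | succ k ih => rw [TT_step M hM k, ih]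
  have hQ : Qdet M = TT M 0 := by rw [← TT_top, hstep n]
  obtain ⟨c, hc⟩ := TT_zero M
  have hc' : Qdet M = algebraMap ℂ HC c := by rw [hQ, hc]
  refine ⟨?_, c, hc'⟩
  rw [hc', QuaternionAlgebra.coe_algebraMap]
  exact QuaternionAlgebra.star_coe c
end

section
/- If M is a self-adjoint n×n matrix over ℍ_ℂ and two distinct columns of M are equal (i.e., there exist i ≠ j with M_{k,i} = M_{k,j} for all k), then Qdet M = 0; the same conclusion holds if two distinct rows of M are equal. -/
open Quaternion Matrix

section Part1
/-! ### Quaternion algebra lemmas -/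

lemma re_star (q : HC) : (star q).re = q.re := by simp

lemma re_mul_comm (a b : HC) : (a * b).re = (b * a).re := by
  simp only [QuaternionAlgebra.re_mul]; ring

lemma re_mul_coe (a : HC) (c : ℂ) : (a * (c : HC)).re = a.re * c := by
  simp [QuaternionAlgebra.re_mul]

lemma re_add (a b : HC) : (a + b).re = a.re + b.re := rfl

lemma star_eq (q : HC) : star q = ((2 * q.re : ℂ) : HC) - q := by
  rw [eq_sub_iff_add_eq, add_comm, QuaternionAlgebra.self_add_star', zero_mul, add_zero]

lemma re_mul_add_re_mul_star (a b : HC) : (a * b).re + (a * star b).re = 2 * a.re * b.re := by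
  rw [← re_add, ← mul_add, QuaternionAlgebra.self_add_star', re_mul_coe]; ring

end Part1

section Part2
/-! ### Permutation power lemmas -/

variable {n : ℕ} (σ : Equiv.Perm (Fin n))

/-- length of the cycle of `σ` through `x`. -/
noncomputable def per (σ : Equiv.Perm (Fin n)) (x : Fin n) : ℕ := orderOf (σ.cycleOf x)

lemma per_pos (x : Fin n) : 0 < per σ x := orderOf_pos _

lemma pow_per_apply (x : Fin n) : (σ ^ per σ x) x = x := by
  rw [← Equiv.Perm.cycleOf_pow_apply_self, per, pow_orderOf_eq_one]; rfl

lemma sameCycle_of_pow {x y : Fin n} {t : ℕ} (h : (σ ^ t) x = y) : σ.SameCycle x y :=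
  ⟨(t : ℤ), by simpa [zpow_natCast] using h⟩

lemma sameCycle_exists_pow {x y : Fin n} (h : σ.SameCycle x y) : ∃ t : ℕ, (σ ^ t) x = y := by
  obtain ⟨t, _, ht⟩ := h.exists_pow_eq'
  exact ⟨t, ht⟩

lemma cycleOf_pow_eq_one_iff (x : Fin n) (t : ℕ) :
    (σ.cycleOf x) ^ t = 1 ↔ (σ ^ t) x = x := by
  constructor
  · intro h
    have := Equiv.Perm.cycleOf_pow_apply_self σ x t
    rw [h] at this
    simpa using this.symm
  · intro h
    have hpow : ∀ (s : ℕ) (k : ℤ), ((σ.cycleOf x) ^ s) ((σ ^ k) x) = (σ ^ (k + s)) x := by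
      intro s
      induction s with
      | zero => simp
      | succ s ih =>
        intro k
        rw [pow_succ', Equiv.Perm.mul_apply, ih k, Equiv.Perm.cycleOf_apply_apply_zpow_self]
        congr 1
        push_cast
        ring
    ext y
    by_cases hy : σ.SameCycle x y
    · obtain ⟨k, hk⟩ := hy
      subst hk
      rw [hpow t k]
      have h2 : (σ ^ (k + t : ℤ)) x = (σ ^ k) ((σ ^ (t : ℤ)) x) := by
        rw [← Equiv.Perm.mul_apply, ← _root_.zpow_add]
      rw [h2]
      simp only [zpow_natCast, h, Equiv.Perm.one_apply]
    · have hfix : ∀ s : ℕ, ((σ.cycleOf x) ^ s) y = y := by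
        intro s
        induction s with
        | zero => simp
        | succ s ih =>
          rw [pow_succ', Equiv.Perm.mul_apply, ih, Equiv.Perm.cycleOf_apply_of_not_sameCycle hy]
      rw [hfix t, Equiv.Perm.one_apply]

lemma pow_apply_eq_iff_per_dvd {x : Fin n} {t : ℕ} : (σ ^ t) x = x ↔ per σ x ∣ t := by
  rw [per, orderOf_dvd_iff_pow_eq_one, cycleOf_pow_eq_one_iff]

lemma pow_mod_apply {x : Fin n} {p : ℕ} (h : (σ ^ p) x = x) (t : ℕ) :
    (σ ^ t) x = (σ ^ (t % p)) x := by
  conv_lhs => rw [← Nat.mod_add_div t p]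
  rw [pow_add, Equiv.Perm.mul_apply]
  congr 1
  induction (t / p) with
  | zero => simp
  | succ s ih => rw [Nat.mul_succ, pow_add, Equiv.Perm.mul_apply, h, ih]

lemma per_dvd_of_pow_eq_pow {σ' : Equiv.Perm (Fin n)} {x : Fin n}
    (h : ∀ t : ℕ, (σ' ^ t) x = (σ ^ t) x) : per σ x = per σ' x := by
  apply Nat.dvd_antisymm
  · rw [← pow_apply_eq_iff_per_dvd, ← h, pow_apply_eq_iff_per_dvd]
  · rw [← pow_apply_eq_iff_per_dvd, h, pow_apply_eq_iff_per_dvd]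

end Part2

section Part3
/-! ### products over ranges, cycFac basic lemmas -/

/-- noncommutative product `f 0 * f 1 * ⋯ * f (s-1)`. -/
noncomputable def rngP (f : ℕ → HC) (s : ℕ) : HC := ((List.range s).map f).prod

lemma rngP_succ (f : ℕ → HC) (s : ℕ) : rngP f (s + 1) = rngP f s * f s := by
  simp [rngP, List.range_succ]

lemma rngP_succ' (f : ℕ → HC) (s : ℕ) : rngP f (s + 1) = f 0 * rngP (fun t => f (t + 1)) s := by
  simp [rngP, List.range_succ_eq_map, List.map_map, Function.comp_def]

lemma rngP_add (f : ℕ → HC) (a b : ℕ) :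
    rngP f (a + b) = rngP f a * rngP (fun t => f (a + t)) b := by
  simp [rngP, List.range_add, List.map_map, Function.comp_def]

lemma rngP_congr {f g : ℕ → HC} {s : ℕ} (h : ∀ t < s, f t = g t) : rngP f s = rngP g s := by
  unfold rngP
  congr 1
  apply List.map_congr_left
  intro t ht
  exact h t (List.mem_range.mp ht)

lemma star_rngP (f : ℕ → HC) (s : ℕ) :
    star (rngP f s) = rngP (fun t => star (f (s - 1 - t))) s := by
  induction s with
  | zero => simp [rngP]
  | succ s ih =>
    rw [rngP_succ, StarMul.star_mul, ih, rngP_succ']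
    simp only [Nat.add_sub_cancel, Nat.sub_zero]
    congr 1
    apply rngP_congr
    intro t _
    congr 2
    omega

variable {n : ℕ}

lemma cycFac_eq_rngP (M : Matrix (Fin n) (Fin n) HC) (σ : Equiv.Perm (Fin n)) (x : Fin n) :
    cycFac M σ x = rngP (fun t => M ((σ ^ t) x) ((σ ^ (t + 1)) x)) (per σ x) := rfl

lemma per_apply (σ : Equiv.Perm (Fin n)) (x : Fin n) : per σ (σ x) = per σ x := by
  unfold per
  rw [Equiv.Perm.cycleOf_self_apply]

lemma pow_apply_comm (σ : Equiv.Perm (Fin n)) (t : ℕ) (x : Fin n) :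
    (σ ^ t) (σ x) = (σ ^ (t + 1)) x := by
  rw [pow_succ, Equiv.Perm.mul_apply]

lemma re_cycFac_apply (M : Matrix (Fin n) (Fin n) HC) (σ : Equiv.Perm (Fin n)) (x : Fin n) :
    (cycFac M σ (σ x)).re = (cycFac M σ x).re := by
  obtain ⟨s, hs⟩ : ∃ s, per σ x = s + 1 := ⟨per σ x - 1, by have := per_pos σ x; omega⟩
  rw [cycFac_eq_rngP, cycFac_eq_rngP, per_apply, hs]
  rw [rngP_succ, rngP_succ']
  have hfix : (σ ^ (s + 1)) x = x := by rw [← hs]; exact pow_per_apply σ x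
  have E1 : rngP (fun t => M ((σ ^ t) (σ x)) ((σ ^ (t + 1)) (σ x))) s
      = rngP (fun t => M ((σ ^ (t + 1)) x) ((σ ^ (t + 1 + 1)) x)) s := by
    apply rngP_congr
    intro t _
    rw [pow_apply_comm, pow_apply_comm]
  have E2 : M ((σ ^ s) (σ x)) ((σ ^ (s + 1)) (σ x)) = M ((σ ^ 0) x) ((σ ^ (0 + 1)) x) := by
    have h1 : (σ ^ s) (σ x) = x := by rw [pow_apply_comm]; exact hfix
    have h2 : (σ ^ (s + 1)) (σ x) = σ x := by
      rw [pow_apply_comm, pow_succ', Equiv.Perm.mul_apply, hfix]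
    rw [h1, h2]
    simp
  rw [E1, E2, re_mul_comm]

lemma re_cycFac_pow (M : Matrix (Fin n) (Fin n) HC) (σ : Equiv.Perm (Fin n)) (x : Fin n) (t : ℕ) :
    (cycFac M σ ((σ ^ t) x)).re = (cycFac M σ x).re := by
  induction t with
  | zero => simp
  | succ t ih =>
    rw [pow_succ', Equiv.Perm.mul_apply, ← ih]
    · exact re_cycFac_apply M σ _
  
lemma re_cycFac_sameCycle (M : Matrix (Fin n) (Fin n) HC) (σ : Equiv.Perm (Fin n)) {x y : Fin n}
    (h : σ.SameCycle x y) : (cycFac M σ y).re = (cycFac M σ x).re := by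
  obtain ⟨t, ht⟩ := sameCycle_exists_pow σ h
  rw [← ht, re_cycFac_pow]

end Part3

section Part4
/-! ### reversing one cycle of a permutation -/

open scoped Classical

variable {n : ℕ}

lemma commute_cycleOf (σ : Equiv.Perm (Fin n)) (z : Fin n) : Commute σ (σ.cycleOf z) := by
  apply Equiv.ext
  intro y
  rw [Equiv.Perm.mul_apply, Equiv.Perm.mul_apply]
  by_cases h : σ.SameCycle z y
  · rw [h.cycleOf_apply, Equiv.Perm.SameCycle.cycleOf_apply (h.trans ⟨1, by simp⟩)]
  · rw [Equiv.Perm.cycleOf_apply_of_not_sameCycle h,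
      Equiv.Perm.cycleOf_apply_of_not_sameCycle (fun hc => h (hc.trans ⟨-1, by simp⟩))]

lemma cycleOf_zpow_apply_on (σ : Equiv.Perm (Fin n)) {z y : Fin n} (h : σ.SameCycle z y) (k : ℤ) :
    ((σ.cycleOf z) ^ k) y = (σ ^ k) y := by
  obtain ⟨m, hm⟩ := h
  subst hm
  calc ((σ.cycleOf z) ^ k) ((σ ^ m) z) = ((σ.cycleOf z) ^ k) (((σ.cycleOf z) ^ m) z) := by
        rw [Equiv.Perm.cycleOf_zpow_apply_self]
    _ = ((σ.cycleOf z) ^ (k + m)) z := by rw [← Equiv.Perm.mul_apply, ← _root_.zpow_add]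
    _ = (σ ^ (k + m)) z := Equiv.Perm.cycleOf_zpow_apply_self σ z (k + m)
    _ = (σ ^ k) ((σ ^ m) z) := by rw [_root_.zpow_add, Equiv.Perm.mul_apply]

lemma cycleOf_zpow_apply_off (σ : Equiv.Perm (Fin n)) {z y : Fin n} (h : ¬σ.SameCycle z y)
    (k : ℤ) : ((σ.cycleOf z) ^ k) y = y :=
  Equiv.Perm.zpow_apply_eq_self_of_apply_eq_self
    (Equiv.Perm.cycleOf_apply_of_not_sameCycle h) k

/-- The permutation obtained from `σ` by reversing the cycle through `z`. -/
noncomputable def revAt (σ : Equiv.Perm (Fin n)) (z : Fin n) : Equiv.Perm (Fin n) :=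
  σ * ((σ.cycleOf z) ^ (-2 : ℤ))

lemma revAt_zpow (σ : Equiv.Perm (Fin n)) (z : Fin n) (k : ℤ) :
    (revAt σ z) ^ k = (σ ^ k) * ((σ.cycleOf z) ^ (-2 * k)) := by
  unfold revAt
  rw [((commute_cycleOf σ z).zpow_right (-2 : ℤ)).mul_zpow, ← _root_.zpow_mul]

lemma revAt_zpow_on (σ : Equiv.Perm (Fin n)) {z y : Fin n} (h : σ.SameCycle z y) (k : ℤ) :
    ((revAt σ z) ^ k) y = (σ ^ (-k)) y := by
  rw [revAt_zpow, Equiv.Perm.mul_apply, cycleOf_zpow_apply_on σ h, ← Equiv.Perm.mul_apply,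
    ← _root_.zpow_add]
  congr 2
  ring

lemma revAt_zpow_off (σ : Equiv.Perm (Fin n)) {z y : Fin n} (h : ¬σ.SameCycle z y) (k : ℤ) :
    ((revAt σ z) ^ k) y = (σ ^ k) y := by
  rw [revAt_zpow, Equiv.Perm.mul_apply, cycleOf_zpow_apply_off σ h]

lemma revAt_pow_on (σ : Equiv.Perm (Fin n)) {z y : Fin n} (h : σ.SameCycle z y) (t : ℕ) :
    ((revAt σ z) ^ t) y = ((σ ^ t)⁻¹) y := by
  have := revAt_zpow_on σ h (t : ℤ)
  rw [zpow_natCast] at this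
  rw [this, _root_.zpow_neg, zpow_natCast]

lemma revAt_pow_off (σ : Equiv.Perm (Fin n)) {z y : Fin n} (h : ¬σ.SameCycle z y) (t : ℕ) :
    ((revAt σ z) ^ t) y = (σ ^ t) y := by
  have := revAt_zpow_off σ h (t : ℤ)
  rwa [zpow_natCast, zpow_natCast] at this

lemma sameCycle_revAt (σ : Equiv.Perm (Fin n)) (z : Fin n) (x y : Fin n) :
    (revAt σ z).SameCycle x y ↔ σ.SameCycle x y := by
  by_cases h : σ.SameCycle z x
  · constructor
    · rintro ⟨k, hk⟩
      exact ⟨-k, by rwa [revAt_zpow_on σ h k] at hk⟩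
    · rintro ⟨k, hk⟩
      exact ⟨-k, by rwa [revAt_zpow_on σ h (-k), neg_neg]⟩
  · constructor
    · rintro ⟨k, hk⟩
      exact ⟨k, by rwa [revAt_zpow_off σ h k] at hk⟩
    · rintro ⟨k, hk⟩
      exact ⟨k, by rwa [revAt_zpow_off σ h k]⟩

lemma per_revAt (σ : Equiv.Perm (Fin n)) (z y : Fin n) : per (revAt σ z) y = per σ y := by
  symm
  by_cases h : σ.SameCycle z y
  · apply Nat.dvd_antisymm
    · rw [← pow_apply_eq_iff_per_dvd]
      have h1 := pow_per_apply (revAt σ z) y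
      rw [revAt_pow_on σ h] at h1
      rw [Equiv.Perm.inv_eq_iff_eq] at h1
      exact h1.symm
    · rw [← pow_apply_eq_iff_per_dvd, revAt_pow_on σ h, Equiv.Perm.inv_eq_iff_eq,
        pow_per_apply]
  · exact per_dvd_of_pow_eq_pow _ (fun t => revAt_pow_off σ h t)

lemma cycFac_revAt_off (M : Matrix (Fin n) (Fin n) HC) (σ : Equiv.Perm (Fin n)) {z y : Fin n}
    (h : ¬σ.SameCycle z y) : cycFac M (revAt σ z) y = cycFac M σ y := by
  rw [cycFac_eq_rngP, cycFac_eq_rngP, per_revAt]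
  apply rngP_congr
  intro t _
  rw [revAt_pow_off σ h, revAt_pow_off σ h]

lemma pow_sub_apply (σ : Equiv.Perm (Fin n)) {z : Fin n} {s : ℕ} (hs0 : (σ ^ s) z = z) {t : ℕ}
    (ht : t ≤ s) : (σ ^ (s - t)) z = ((σ ^ t)⁻¹) z := by
  rw [eq_comm, Equiv.Perm.inv_eq_iff_eq, ← Equiv.Perm.mul_apply, ← pow_add]
  rw [show t + (s - t) = s from by omega, hs0]

lemma cycFac_revAt_on (M : Matrix (Fin n) (Fin n) HC) (hM : IsSelfAdjointQ M)
    (σ : Equiv.Perm (Fin n)) (z : Fin n) :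
    cycFac M (revAt σ z) z = star (cycFac M σ z) := by
  rw [cycFac_eq_rngP, cycFac_eq_rngP, per_revAt, star_rngP]
  apply rngP_congr
  intro t ht
  have hz : (σ ^ (per σ z)) z = z := pow_per_apply σ z
  rw [← hM]
  have e1 : ((revAt σ z) ^ t) z = (σ ^ (per σ z - t)) z := by
    rw [revAt_pow_on σ (Equiv.Perm.SameCycle.refl σ z),
      ← pow_sub_apply σ hz (show t ≤ per σ z from le_of_lt ht)]
  have e2 : ((revAt σ z) ^ (t + 1)) z = (σ ^ (per σ z - 1 - t)) z := by
    rw [revAt_pow_on σ (Equiv.Perm.SameCycle.refl σ z),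
      ← pow_sub_apply σ hz (show t + 1 ≤ per σ z from ht),
      show per σ z - (t + 1) = per σ z - 1 - t from by omega]
  have e3 : per σ z - t = per σ z - 1 - t + 1 := by omega
  rw [e1, e2, e3]

lemma sign_revAt (σ : Equiv.Perm (Fin n)) (z : Fin n) :
    Equiv.Perm.sign (revAt σ z) = Equiv.Perm.sign σ := by
  unfold revAt
  rw [_root_.map_mul]
  have h1 : (Equiv.Perm.sign ((σ.cycleOf z) ^ (-2 : ℤ))) = 1 := by
    rw [map_zpow]
    rcases Int.units_eq_one_or (Equiv.Perm.sign (σ.cycleOf z)) with h | h <;> rw [h] <;> decide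
  rw [h1, mul_one]

lemma cycleOf_revAt (σ : Equiv.Perm (Fin n)) (z : Fin n) :
    (revAt σ z).cycleOf z = (σ.cycleOf z)⁻¹ := by
  apply Equiv.ext
  intro y
  by_cases h : σ.SameCycle z y
  · have h' : (revAt σ z).SameCycle z y := (sameCycle_revAt σ z z y).mpr h
    rw [h'.cycleOf_apply]
    have h1 : revAt σ z y = (σ ^ (-1 : ℤ)) y := by
      have := revAt_zpow_on σ h 1
      rwa [zpow_one] at this
    rw [h1]
    rw [show ((σ.cycleOf z)⁻¹ : Equiv.Perm (Fin n)) = (σ.cycleOf z) ^ (-1 : ℤ) from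
      (_root_.zpow_neg_one _).symm, cycleOf_zpow_apply_on σ h]
  · rw [Equiv.Perm.cycleOf_apply_of_not_sameCycle
      (fun hc => h ((sameCycle_revAt σ z z y).mp hc))]
    rw [show ((σ.cycleOf z)⁻¹ : Equiv.Perm (Fin n)) = (σ.cycleOf z) ^ (-1 : ℤ) from
      (_root_.zpow_neg_one _).symm, cycleOf_zpow_apply_off σ h]

lemma revAt_revAt (σ : Equiv.Perm (Fin n)) (z : Fin n) : revAt (revAt σ z) z = σ := by
  rw [show revAt (revAt σ z) z = revAt σ z * (((revAt σ z).cycleOf z) ^ (-2 : ℤ)) from rfl,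
    cycleOf_revAt]
  unfold revAt
  group

end Part4

section Part5
/-! ### cycle maxima -/

open scoped Classical

variable {n : ℕ}

/-- set of cycle maxima of `σ`. -/
noncomputable def maxes (σ : Equiv.Perm (Fin n)) : Finset (Fin n) :=
  Finset.univ.filter (fun x : Fin n => ∀ y : Fin n, σ.SameCycle x y → y ≤ x)

lemma mem_maxes {σ : Equiv.Perm (Fin n)} {x : Fin n} :
    x ∈ maxes σ ↔ ∀ y : Fin n, σ.SameCycle x y → y ≤ x := by
  simp [maxes]

lemma maxes_unique {σ : Equiv.Perm (Fin n)} {x y : Fin n} (hx : x ∈ maxes σ) (hy : y ∈ maxes σ)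
    (h : σ.SameCycle x y) : x = y :=
  le_antisymm (mem_maxes.mp hy x h.symm) (mem_maxes.mp hx y h)

/-- the maximum of the cycle of `σ` through `x`. -/
noncomputable def theMax (σ : Equiv.Perm (Fin n)) (x : Fin n) : Fin n :=
  (Finset.univ.filter (fun y => σ.SameCycle x y)).max'
    ⟨x, by simp [Equiv.Perm.SameCycle.refl]⟩

lemma sameCycle_theMax (σ : Equiv.Perm (Fin n)) (x : Fin n) : σ.SameCycle x (theMax σ x) := by
  have := (Finset.univ.filter (fun y => σ.SameCycle x y)).max'_mem
    ⟨x, by simp [Equiv.Perm.SameCycle.refl]⟩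
  simpa [theMax] using (Finset.mem_filter.mp this).2

lemma le_theMax (σ : Equiv.Perm (Fin n)) {x y : Fin n} (h : σ.SameCycle x y) : y ≤ theMax σ x :=
  Finset.le_max' _ y (by simp [h])

lemma theMax_mem_maxes (σ : Equiv.Perm (Fin n)) (x : Fin n) : theMax σ x ∈ maxes σ := by
  rw [mem_maxes]
  intro y hy
  exact le_theMax σ ((sameCycle_theMax σ x).trans hy)

lemma theMax_eq_of_mem_maxes {σ : Equiv.Perm (Fin n)} {x y : Fin n} (hx : x ∈ maxes σ)
    (h : σ.SameCycle x y) : theMax σ y = x :=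
  (maxes_unique hx (theMax_mem_maxes σ y) (h.trans (sameCycle_theMax σ y))).symm

lemma maxes_congr {σ σ' : Equiv.Perm (Fin n)}
    (h : ∀ x y : Fin n, σ'.SameCycle x y ↔ σ.SameCycle x y) : maxes σ' = maxes σ := by
  unfold maxes
  apply Finset.filter_congr
  intro x _
  constructor
  · intro hx y hy
    exact hx y ((h x y).mpr hy)
  · intro hx y hy
    exact hx y ((h x y).mp hy)

lemma theMax_congr {σ σ' : Equiv.Perm (Fin n)}
    (h : ∀ x y : Fin n, σ'.SameCycle x y ↔ σ.SameCycle x y) (x : Fin n) :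
    theMax σ' x = theMax σ x := by
  unfold theMax
  congr 1
  apply Finset.filter_congr
  intro y _
  simp only [h]

lemma maxes_revAt (σ : Equiv.Perm (Fin n)) (z : Fin n) : maxes (revAt σ z) = maxes σ :=
  maxes_congr (sameCycle_revAt σ z)

/-- The ordered list of cycle maxima, decreasing. -/
noncomputable def maxL (σ : Equiv.Perm (Fin n)) : List (Fin n) :=
  ((maxes σ).sort (· ≤ ·)).reverse

lemma maxL_nodup (σ : Equiv.Perm (Fin n)) : (maxL σ).Nodup := by
  rw [maxL, List.nodup_reverse]; exact Finset.sort_nodup _ _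

lemma mem_maxL {σ : Equiv.Perm (Fin n)} {x : Fin n} : x ∈ maxL σ ↔ x ∈ maxes σ := by
  simp [maxL, Finset.mem_sort]

lemma permFac_eq_maxL (M : Matrix (Fin n) (Fin n) HC) (σ : Equiv.Perm (Fin n)) :
    permFac M σ = ((maxL σ).map (cycFac M σ)).prod := rfl

end Part5

section Part6
/-! ### Qdet as a sum of products of real parts -/

open scoped Classical

variable {n : ℕ}

/-- telescoping difference of two list products. -/
lemma tele {α : Type*} (f g : α → HC) (d : α) (l : List α) :
    (l.map f).prod - (l.map g).prod
      = ∑ k ∈ Finset.range l.length,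
          ((l.take k).map g).prod * (f (l.getD k d) - g (l.getD k d))
            * ((l.drop (k + 1)).map f).prod := by
  induction l with
  | nil => simp
  | cons a l ih =>
    rw [List.length_cons, Finset.sum_range_succ']
    simp only [List.take_succ_cons, List.drop_succ_cons, List.getD_cons_succ, List.getD_cons_zero,
      List.take_zero, List.map_nil, List.prod_nil, one_mul, List.map_cons, List.prod_cons,
      List.drop_zero]
    have : ∑ k ∈ Finset.range l.length,
        (g a * ((l.take k).map g).prod) * (f (l.getD k d) - g (l.getD k d))
          * ((l.drop (k + 1)).map f).prod
        = g a * ((l.map f).prod - (l.map g).prod) := by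
      rw [ih, Finset.mul_sum]
      apply Finset.sum_congr rfl
      intro k _
      simp only [mul_assoc]
    rw [this]
    noncomm_ring

/-- the scalar (complex) version of the permutation factor: product of real parts of the
cycle factors over the cycle maxima. -/
noncomputable def Gc (M : Matrix (Fin n) (Fin n) HC) (σ : Equiv.Perm (Fin n)) : ℂ :=
  ∏ x ∈ maxes σ, (cycFac M σ x).re

noncomputable def phic (M : Matrix (Fin n) (Fin n) HC) (σ : Equiv.Perm (Fin n)) (x : Fin n) :
    HC := (((cycFac M σ x).re : ℂ) : HC)

lemma star_sub_phi (q : HC) :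
    star q - ((q.re : ℂ) : HC) = -(q - ((q.re : ℂ) : HC)) := by
  rw [star_eq]
  have h2 : ((2 * q.re : ℂ) : HC) = 2 * ((q.re : ℂ) : HC) := by
    rw [show ((2 * q.re : ℂ) : HC) = algebraMap ℂ HC (2 * q.re) from rfl, _root_.map_mul,
      map_ofNat]
    rfl
  rw [h2]
  noncomm_ring

lemma list_prod_sort (s : Finset (Fin n)) (f : Fin n → ℂ) :
    ((s.sort (· ≤ ·)).map f).prod = ∏ x ∈ s, f x := by
  rw [Finset.prod_eq_multiset_prod, ← Finset.sort_eq (s := s) (r := (· ≤ ·))]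
  rw [Multiset.map_coe, Multiset.prod_coe]

lemma coe_Gc (M : Matrix (Fin n) (Fin n) HC) (σ : Equiv.Perm (Fin n)) :
    ((Gc M σ : ℂ) : HC) = ((maxL σ).map (phic M σ)).prod := by
  have h1 : Gc M σ = ((maxL σ).map (fun x => ((cycFac M σ x).re : ℂ))).prod := by
    rw [Gc, ← list_prod_sort]
    rw [maxL, List.map_reverse, List.prod_reverse]
  rw [h1]
  have h2 := map_list_prod (algebraMap ℂ HC) ((maxL σ).map (fun x => ((cycFac M σ x).re : ℂ)))
  rw [show ((((maxL σ).map (fun x => ((cycFac M σ x).re : ℂ))).prod : ℂ) : HC)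
      = algebraMap ℂ HC (((maxL σ).map (fun x => ((cycFac M σ x).re : ℂ))).prod) from rfl, h2]
  rw [List.map_map]
  rfl

lemma maxL_revAt (σ : Equiv.Perm (Fin n)) (z : Fin n) : maxL (revAt σ z) = maxL σ := by
  rw [maxL, maxL, maxes_revAt]

lemma not_sameCycle_of_maxes {σ : Equiv.Perm (Fin n)} {x y : Fin n} (hx : x ∈ maxes σ)
    (hy : y ∈ maxes σ) (hne : x ≠ y) : ¬σ.SameCycle x y :=
  fun h => hne (maxes_unique hx hy h)

lemma claim1 (M : Matrix (Fin n) (Fin n) HC) (hM : IsSelfAdjointQ M) (x0 : Fin n) :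
    Qdet M = (((∑ σ : Equiv.Perm (Fin n), ((Equiv.Perm.sign σ : ℤ) : ℂ) * Gc M σ) : ℂ) : HC)
    := by
  have coe_sum : (((∑ σ : Equiv.Perm (Fin n), ((Equiv.Perm.sign σ : ℤ) : ℂ) * Gc M σ) : ℂ) : HC)
      = ∑ σ : Equiv.Perm (Fin n),
          ((Equiv.Perm.sign σ : ℤ) : HC) * ((maxL σ).map (phic M σ)).prod := by
    rw [show (((∑ σ : Equiv.Perm (Fin n), ((Equiv.Perm.sign σ : ℤ) : ℂ) * Gc M σ) : ℂ) : HC)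
        = algebraMap ℂ HC (∑ σ : Equiv.Perm (Fin n), ((Equiv.Perm.sign σ : ℤ) : ℂ) * Gc M σ)
        from rfl, map_sum]
    apply Finset.sum_congr rfl
    intro σ _
    rw [_root_.map_mul, map_intCast]
    congr 1
    exact coe_Gc M σ
  rw [Qdet, coe_sum, ← sub_eq_zero, ← Finset.sum_sub_distrib]
  have hsummand : ∀ σ : Equiv.Perm (Fin n),
      ((Equiv.Perm.sign σ : ℤ) : HC) * permFac M σ
        - ((Equiv.Perm.sign σ : ℤ) : HC) * ((maxL σ).map (phic M σ)).prod
      = ∑ k ∈ Finset.range (maxL σ).length,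
          ((Equiv.Perm.sign σ : ℤ) : HC) *
            (((((maxL σ).take k).map (phic M σ)).prod
              * (cycFac M σ ((maxL σ).getD k x0) - phic M σ ((maxL σ).getD k x0))
              * (((maxL σ).drop (k + 1)).map (cycFac M σ)).prod)) := by
    intro σ
    rw [← mul_sub, permFac_eq_maxL, tele (cycFac M σ) (phic M σ) x0, Finset.mul_sum]
  rw [Finset.sum_congr rfl (fun σ _ => hsummand σ)]
  rw [Finset.sum_sigma']
  -- now cancel by the involution reversing the k-th cycle
  set F : (Σ _ : Equiv.Perm (Fin n), ℕ) → HC := fun p =>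
    ((Equiv.Perm.sign p.1 : ℤ) : HC) *
      (((((maxL p.1).take p.2).map (phic M p.1)).prod
        * (cycFac M p.1 ((maxL p.1).getD p.2 x0) - phic M p.1 ((maxL p.1).getD p.2 x0))
        * (((maxL p.1).drop (p.2 + 1)).map (cycFac M p.1)).prod)) with hF
  set s : Finset (Σ _ : Equiv.Perm (Fin n), ℕ) :=
    Finset.univ.sigma (fun σ => Finset.range (maxL σ).length) with hs
  set J : (Σ _ : Equiv.Perm (Fin n), ℕ) → (Σ _ : Equiv.Perm (Fin n), ℕ) := fun p =>
    ⟨revAt p.1 ((maxL p.1).getD p.2 x0), p.2⟩ with hJ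
  have hJs : ∀ p ∈ s, J p ∈ s := by
    rintro ⟨σ, k⟩ hp
    simp only [hJ, hs, Finset.mem_sigma, Finset.mem_univ, Finset.mem_range, true_and,
      maxL_revAt] at hp ⊢
    exact hp
  have hJJ : ∀ p ∈ s, J (J p) = p := by
    rintro ⟨σ, k⟩ _
    simp only [hJ, maxL_revAt, revAt_revAt]
  have hkey : ∀ p ∈ s, F p = - F (J p) := by
    rintro ⟨σ, k⟩ hp
    simp only [hs, Finset.mem_sigma, Finset.mem_univ, Finset.mem_range, true_and] at hp
    set z : Fin n := (maxL σ).getD k x0 with hz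
    have hzmem : z ∈ maxes σ := by
      rw [← mem_maxL, hz]
      rw [List.getD_eq_getElem _ _ hp]
      exact List.getElem_mem _
    have hmaxLr : maxL (revAt σ z) = maxL σ := maxL_revAt σ z
    have hdropk : (maxL σ).drop k = z :: (maxL σ).drop (k + 1) := by
      rw [hz, List.getD_eq_getElem _ _ hp]
      exact List.drop_eq_getElem_cons hp
    have hnodup := maxL_nodup σ
    have hzdrop : z ∉ (maxL σ).drop (k + 1) := by
      have h1 : ((maxL σ).drop k).Nodup := (List.drop_sublist k _).nodup hnodup
      rw [hdropk] at h1
      exact (List.nodup_cons.mp h1).1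
    have hztake : z ∉ (maxL σ).take k := by
      intro hzin
      have h2 : ((maxL σ).take k ++ (maxL σ).drop k).Nodup := by
        rw [List.take_append_drop]; exact hnodup
      have := (List.nodup_append.mp h2).2.2
      exact this z hzin z (by rw [hdropk]; exact List.mem_cons_self) rfl
    have hoff : ∀ y ∈ maxes σ, y ≠ z → cycFac M (revAt σ z) y = cycFac M σ y := by
      intro y hy hne
      exact cycFac_revAt_off M σ
        (fun h => hne.symm (maxes_unique hzmem hy h))
    -- componentwise equalities
    have etake : (((maxL (revAt σ z)).take k).map (phic M (revAt σ z))).prod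
        = (((maxL σ).take k).map (phic M σ)).prod := by
      rw [hmaxLr]
      congr 1
      apply List.map_congr_left
      intro y hy
      have hymem : y ∈ maxes σ := by
        rw [← mem_maxL]
        exact List.mem_of_mem_take hy
      have hyne : y ≠ z := fun h => hztake (h ▸ hy)
      rw [phic, phic, hoff y hymem hyne]
    have edrop : (((maxL (revAt σ z)).drop (k + 1)).map (cycFac M (revAt σ z))).prod
        = (((maxL σ).drop (k + 1)).map (cycFac M σ)).prod := by
      rw [hmaxLr]
      congr 1
      apply List.map_congr_left
      intro y hy
      have hymem : y ∈ maxes σ := by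
        rw [← mem_maxL]
        exact List.mem_of_mem_drop hy
      have hyne : y ≠ z := fun h => hzdrop (h ▸ hy)
      exact hoff y hymem hyne
    have ezJ : (maxL (revAt σ z)).getD k x0 = z := by rw [hmaxLr, ← hz]
    have emid : cycFac M (revAt σ z) ((maxL (revAt σ z)).getD k x0)
          - phic M (revAt σ z) ((maxL (revAt σ z)).getD k x0)
        = -(cycFac M σ z - phic M σ z) := by
      rw [ezJ, cycFac_revAt_on M hM σ z, phic, phic, cycFac_revAt_on M hM σ z, _root_.re_star,
        star_sub_phi]
    rw [hF]
    simp only [hJ]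
    rw [← hz]
    rw [etake, edrop, emid, sign_revAt]
    noncomm_ring
  -- sum cancels
  have flip : ∑ p ∈ s, F p = ∑ p ∈ s, - F p :=
    Finset.sum_nbij' (g := fun p => - F p) (i := J) (j := J) (fun a ha => hJs a ha)
      (fun a ha => hJs a ha) (fun a ha => hJJ a ha) (fun a ha => hJJ a ha)
      (fun a ha => hkey a ha)
  rw [Finset.sum_neg_distrib] at flip
  have h2 : ((2 : ℂ)) • (∑ p ∈ s, F p) = 0 := by
    rw [two_smul]
    nth_rewrite 2 [flip]
    simp
  have := smul_eq_zero.mp h2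
  simpa using this

end Part6

section Part7
/-! ### merging two cycles by a transposition -/

open scoped Classical

variable {n : ℕ} {M : Matrix (Fin n) (Fin n) HC} {i j : Fin n} {σ : Equiv.Perm (Fin n)}

lemma m_orbit1 (hij : i ≠ j) (hsep : ¬σ.SameCycle i j) :
    ∀ t, 1 ≤ t → t ≤ per σ i → ((σ * Equiv.swap i j) ^ t) j = (σ ^ t) i := by
  intro t
  induction t with
  | zero => omega
  | succ t ih =>
    intro _ hta
    by_cases ht0 : t = 0
    · subst ht0
      simp [Equiv.Perm.mul_apply, Equiv.swap_apply_right]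
    · have ih' := ih (by omega) (by omega)
      rw [pow_succ', Equiv.Perm.mul_apply, ih', Equiv.Perm.mul_apply]
      have h1 : (σ ^ t) i ≠ i := by
        intro h
        have := (pow_apply_eq_iff_per_dvd σ).mp h
        have := Nat.le_of_dvd (by omega) this
        omega
      have h2 : (σ ^ t) i ≠ j := fun h => hsep (sameCycle_of_pow σ h)
      rw [Equiv.swap_apply_of_ne_of_ne h1 h2, pow_succ', Equiv.Perm.mul_apply]

lemma m_orbit2 (hij : i ≠ j) (hsep : ¬σ.SameCycle i j) :
    ∀ u, 1 ≤ u → u ≤ per σ j → ((σ * Equiv.swap i j) ^ (per σ i + u)) j = (σ ^ u) j := by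
  intro u
  induction u with
  | zero => omega
  | succ u ih =>
    intro _ hub
    by_cases hu0 : u = 0
    · subst hu0
      rw [pow_succ', Equiv.Perm.mul_apply,
        m_orbit1 hij hsep (per σ i) (per_pos σ i) le_rfl, pow_per_apply,
        Equiv.Perm.mul_apply, Equiv.swap_apply_left, pow_one]
    · have ih' := ih (by omega) (by omega)
      rw [show per σ i + (u + 1) = (per σ i + u) + 1 from rfl, pow_succ', Equiv.Perm.mul_apply,
        ih', Equiv.Perm.mul_apply]
      have h1 : (σ ^ u) j ≠ j := by
        intro h
        have := (pow_apply_eq_iff_per_dvd σ).mp h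
        have := Nat.le_of_dvd (by omega) this
        omega
      have h2 : (σ ^ u) j ≠ i := fun h => hsep (sameCycle_of_pow σ h).symm
      rw [Equiv.swap_apply_of_ne_of_ne h2 h1, pow_succ', Equiv.Perm.mul_apply]

lemma m_period (hij : i ≠ j) (hsep : ¬σ.SameCycle i j) :
    ((σ * Equiv.swap i j) ^ (per σ i + per σ j)) j = j := by
  rw [m_orbit2 hij hsep (per σ j) (per_pos σ j) le_rfl, pow_per_apply]

lemma m_per (hij : i ≠ j) (hsep : ¬σ.SameCycle i j) :
    per (σ * Equiv.swap i j) j = per σ i + per σ j := by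
  set ρ := σ * Equiv.swap i j with hρ
  have hdvd : per ρ j ∣ per σ i + per σ j :=
    (pow_apply_eq_iff_per_dvd _).mp (m_period hij hsep)
  have hle : per ρ j ≤ per σ i + per σ j :=
    Nat.le_of_dvd (by have := per_pos σ i; omega) hdvd
  rcases lt_or_eq_of_le hle with hlt | heq
  · exfalso
    have hfix : (ρ ^ per ρ j) j = j := pow_per_apply ρ j
    have hpos : 1 ≤ per ρ j := per_pos ρ j
    by_cases hcase : per ρ j ≤ per σ i
    · rw [m_orbit1 hij hsep (per ρ j) hpos hcase] at hfix
      exact hsep (sameCycle_of_pow σ hfix)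
    · push_neg at hcase
      obtain ⟨u, hu⟩ : ∃ u, per ρ j = per σ i + u := ⟨per ρ j - per σ i, by omega⟩
      have hu1 : 1 ≤ u := by omega
      have hub : u ≤ per σ j := by omega
      rw [hu, m_orbit2 hij hsep u hu1 hub] at hfix
      have := Nat.le_of_dvd (by omega) ((pow_apply_eq_iff_per_dvd σ).mp hfix)
      omega
  · exact heq

lemma m_split (hij : i ≠ j) (hsep : ¬σ.SameCycle i j) (hr : ∀ k, M i k = M j k) :
    cycFac M (σ * Equiv.swap i j) j = cycFac M σ i * cycFac M σ j := by
  set ρ := σ * Equiv.swap i j with hρ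
  rw [cycFac_eq_rngP, cycFac_eq_rngP, cycFac_eq_rngP, m_per hij hsep, rngP_add]
  congr 1
  · apply rngP_congr
    intro t hta
    by_cases ht0 : t = 0
    · subst ht0
      simp only [pow_zero, zero_add, pow_one, Equiv.Perm.one_apply]
      have h1 : ρ j = σ i := by rw [hρ, Equiv.Perm.mul_apply, Equiv.swap_apply_right]
      rw [h1, ← hr (σ i)]
    · rw [m_orbit1 hij hsep t (by omega) (by omega),
        m_orbit1 hij hsep (t + 1) (by omega) (by omega)]
  · apply rngP_congr
    intro u hub
    by_cases hu0 : u = 0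
    · subst hu0
      simp only [Nat.add_zero, pow_zero, zero_add, pow_one, Equiv.Perm.one_apply]
      rw [m_orbit1 hij hsep (per σ i) (per_pos σ i) le_rfl, pow_per_apply,
        m_orbit2 hij hsep 1 le_rfl (per_pos σ j), pow_one, hr (σ j)]
    · rw [m_orbit2 hij hsep u (by omega) (by omega),
        show per σ i + u + 1 = per σ i + (u + 1) from rfl,
        m_orbit2 hij hsep (u + 1) (by omega) (by omega)]

lemma m_sameCycle (hij : i ≠ j) (hsep : ¬σ.SameCycle i j) (y : Fin n) :
    (σ * Equiv.swap i j).SameCycle j y ↔ (σ.SameCycle i y ∨ σ.SameCycle j y) := by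
  set ρ := σ * Equiv.swap i j with hρ
  set a := per σ i with ha
  set b := per σ j with hb
  constructor
  · intro h
    obtain ⟨t, ht⟩ := sameCycle_exists_pow ρ h
    rw [pow_mod_apply ρ (m_period hij hsep) t] at ht
    set r := t % (a + b) with hr'
    have hrlt : r < a + b := Nat.mod_lt _ (by have := per_pos σ i; omega)
    by_cases hr0 : r = 0
    · right
      rw [hr0, pow_zero, Equiv.Perm.one_apply] at ht
      exact ht ▸ Equiv.Perm.SameCycle.refl σ j
    · by_cases hra : r ≤ a
      · left
        rw [m_orbit1 hij hsep r (by omega) hra] at ht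
        exact sameCycle_of_pow σ ht
      · right
        push_neg at hra
        obtain ⟨u, hu⟩ : ∃ u, r = a + u := ⟨r - a, by omega⟩
        rw [hu, m_orbit2 hij hsep u (by omega) (by omega)] at ht
        exact sameCycle_of_pow σ ht
  · intro h
    rcases h with h | h
    · obtain ⟨t, ht⟩ := sameCycle_exists_pow σ h
      rw [pow_mod_apply σ (pow_per_apply σ i) t] at ht
      set r := t % a with hr'
      have hrlt : r < a := Nat.mod_lt _ (per_pos σ i)
      by_cases hr0 : r = 0
      · rw [hr0, pow_zero, Equiv.Perm.one_apply] at ht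
        have : (ρ ^ a) j = y := by rw [m_orbit1 hij hsep a (per_pos σ i) le_rfl, pow_per_apply, ht]
        exact sameCycle_of_pow ρ this
      · have : (ρ ^ r) j = y := by rw [m_orbit1 hij hsep r (by omega) (by omega), ht]
        exact sameCycle_of_pow ρ this
    · obtain ⟨t, ht⟩ := sameCycle_exists_pow σ h
      rw [pow_mod_apply σ (pow_per_apply σ j) t] at ht
      set r := t % b with hr'
      have hrlt : r < b := Nat.mod_lt _ (per_pos σ j)
      by_cases hr0 : r = 0
      · rw [hr0, pow_zero, Equiv.Perm.one_apply] at ht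
        exact ht ▸ Equiv.Perm.SameCycle.refl ρ j
      · have : (ρ ^ (a + r)) j = y := by rw [m_orbit2 hij hsep r (by omega) (by omega), ht]
        exact sameCycle_of_pow ρ this

lemma m_off_pow {x : Fin n} (hsep1 : ¬σ.SameCycle i x) (hsep2 : ¬σ.SameCycle j x) :
    ∀ t : ℕ, ((σ * Equiv.swap i j) ^ t) x = (σ ^ t) x := by
  intro t
  induction t with
  | zero => simp
  | succ t ih =>
    rw [pow_succ', Equiv.Perm.mul_apply, ih, Equiv.Perm.mul_apply]
    have h1 : (σ ^ t) x ≠ i := fun h => hsep1 (sameCycle_of_pow σ h).symm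
    have h2 : (σ ^ t) x ≠ j := fun h => hsep2 (sameCycle_of_pow σ h).symm
    rw [Equiv.swap_apply_of_ne_of_ne h1 h2, pow_succ', Equiv.Perm.mul_apply]

lemma m_off_cycFac {x : Fin n} (hsep1 : ¬σ.SameCycle i x) (hsep2 : ¬σ.SameCycle j x) :
    cycFac M (σ * Equiv.swap i j) x = cycFac M σ x := by
  rw [cycFac_eq_rngP, cycFac_eq_rngP,
    show per (σ * Equiv.swap i j) x = per σ x from
      (per_dvd_of_pow_eq_pow σ (m_off_pow hsep1 hsep2)).symm ▸ rfl]
  · apply rngP_congr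
    intro t _
    rw [m_off_pow hsep1 hsep2, m_off_pow hsep1 hsep2]

lemma m_off_sameCycle {x : Fin n} (hsep1 : ¬σ.SameCycle i x) (hsep2 : ¬σ.SameCycle j x)
    (y : Fin n) : (σ * Equiv.swap i j).SameCycle x y ↔ σ.SameCycle x y := by
  constructor
  · intro h
    obtain ⟨t, ht⟩ := sameCycle_exists_pow _ h
    rw [m_off_pow hsep1 hsep2] at ht
    exact sameCycle_of_pow σ ht
  · intro h
    obtain ⟨t, ht⟩ := sameCycle_exists_pow _ h
    rw [← m_off_pow hsep1 hsep2] at ht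
    exact sameCycle_of_pow _ ht

lemma theMax_ne (hsep : ¬σ.SameCycle i j) : theMax σ i ≠ theMax σ j := by
  intro h
  exact hsep ((sameCycle_theMax σ i).trans (h ▸ (sameCycle_theMax σ j).symm))

lemma eq_theMax_of_mem {x y : Fin n} (hx : x ∈ maxes σ) (h : σ.SameCycle y x) :
    x = theMax σ y :=
  maxes_unique hx (theMax_mem_maxes σ y) (h.symm.trans (sameCycle_theMax σ y))

lemma m_maxes (hij : i ≠ j) (hsep : ¬σ.SameCycle i j) (hlt : theMax σ j < theMax σ i) :
    maxes (σ * Equiv.swap i j) = (maxes σ).erase (theMax σ j) := by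
  set ρ := σ * Equiv.swap i j with hρ
  ext x
  rw [Finset.mem_erase]
  constructor
  · intro hx
    by_cases hcyc : ρ.SameCycle j x
    · have hx_eq : x = theMax σ i := by
        have hmi : ρ.SameCycle j (theMax σ i) :=
          (m_sameCycle hij hsep _).mpr (Or.inl (sameCycle_theMax σ i))
        have h1 : theMax σ i ≤ x := mem_maxes.mp hx _ (hcyc.symm.trans hmi)
        have h2 : x ≤ theMax σ i := by
          rcases (m_sameCycle hij hsep x).mp hcyc with h | h
          · exact le_theMax σ h
          · exact le_of_lt (lt_of_le_of_lt (le_theMax σ h) hlt)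
        exact le_antisymm h2 h1
      refine ⟨by rw [hx_eq]; exact fun h => absurd h (ne_of_gt hlt), ?_⟩
      rw [hx_eq]; exact theMax_mem_maxes σ i
    · have hs1 : ¬σ.SameCycle i x :=
        fun h => hcyc ((m_sameCycle hij hsep x).mpr (Or.inl h))
      have hs2 : ¬σ.SameCycle j x :=
        fun h => hcyc ((m_sameCycle hij hsep x).mpr (Or.inr h))
      refine ⟨fun h => hs2 (by rw [h]; exact sameCycle_theMax σ j), ?_⟩
      rw [mem_maxes]
      intro y hy
      exact mem_maxes.mp hx y ((m_off_sameCycle hs1 hs2 y).mpr hy)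
  · rintro ⟨hne, hx⟩
    by_cases hcyc : σ.SameCycle i x ∨ σ.SameCycle j x
    · have hx_eq : x = theMax σ i := by
        rcases hcyc with h | h
        · exact eq_theMax_of_mem hx h
        · exact absurd (eq_theMax_of_mem hx h) hne
      rw [mem_maxes]
      intro y hy
      have hjy : ρ.SameCycle j y := by
        have hmi : ρ.SameCycle j x := by
          rw [hx_eq]
          exact (m_sameCycle hij hsep _).mpr (Or.inl (sameCycle_theMax σ i))
        exact hmi.trans hy
      rcases (m_sameCycle hij hsep y).mp hjy with h | h
      · rw [hx_eq]; exact le_theMax σ h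
      · rw [hx_eq]; exact le_of_lt (lt_of_le_of_lt (le_theMax σ h) hlt)
    · push_neg at hcyc
      rw [mem_maxes]
      intro y hy
      exact mem_maxes.mp hx y ((m_off_sameCycle hcyc.1 hcyc.2 y).mp hy)

lemma not_sameCycle_of_ne_theMax {x : Fin n} (hx : x ∈ maxes σ) {z : Fin n}
    (hne : x ≠ theMax σ z) : ¬σ.SameCycle z x :=
  fun h => hne (eq_theMax_of_mem hx h)

lemma m_Gc_main (hij : i ≠ j) (hsep : ¬σ.SameCycle i j) (hr : ∀ k, M i k = M j k)
    (hlt : theMax σ j < theMax σ i) :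
    Gc M (σ * Equiv.swap i j)
      = (cycFac M σ i * cycFac M σ j).re
        * ∏ x ∈ ((maxes σ).erase (theMax σ i)).erase (theMax σ j), (cycFac M σ x).re := by
  set ρ := σ * Equiv.swap i j with hρ
  have hmi_mem : theMax σ i ∈ maxes ρ := by
    rw [m_maxes hij hsep hlt, Finset.mem_erase]
    exact ⟨ne_of_gt hlt, theMax_mem_maxes σ i⟩
  rw [Gc, ← Finset.mul_prod_erase _ _ hmi_mem]
  congr 1
  · rw [re_cycFac_sameCycle M ρ
      ((m_sameCycle hij hsep _).mpr (Or.inl (sameCycle_theMax σ i))).symm.symm]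
    rw [m_split hij hsep hr]
  · rw [m_maxes hij hsep hlt, Finset.erase_right_comm]
    apply Finset.prod_congr rfl
    intro x hx
    have hx1 : x ∈ maxes σ := Finset.mem_of_mem_erase (Finset.mem_of_mem_erase hx)
    have hxni : x ≠ theMax σ i := by
      rcases Finset.mem_erase.mp hx with ⟨h1, h2⟩
      rcases Finset.mem_erase.mp h2 with ⟨h3, _⟩
      exact h3
    have hxnj : x ≠ theMax σ j := (Finset.mem_erase.mp hx).1
    rw [m_off_cycFac (not_sameCycle_of_ne_theMax hx1 hxni)
      (not_sameCycle_of_ne_theMax hx1 hxnj)]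

lemma m_Gc_base (hsep : ¬σ.SameCycle i j) :
    Gc M σ
      = (cycFac M σ i).re * (cycFac M σ j).re
        * ∏ x ∈ ((maxes σ).erase (theMax σ i)).erase (theMax σ j), (cycFac M σ x).re := by
  have hmi : theMax σ i ∈ maxes σ := theMax_mem_maxes σ i
  have hmj : theMax σ j ∈ (maxes σ).erase (theMax σ i) :=
    Finset.mem_erase.mpr ⟨(theMax_ne hsep).symm, theMax_mem_maxes σ j⟩
  rw [Gc, ← Finset.mul_prod_erase _ _ hmi, ← Finset.mul_prod_erase _ _ hmj, ← mul_assoc]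
  congr 2
  · exact re_cycFac_sameCycle M σ (sameCycle_theMax σ i)
  · exact re_cycFac_sameCycle M σ (sameCycle_theMax σ j)

lemma m_GcA (hij : i ≠ j) (hsep : ¬σ.SameCycle i j) (hr : ∀ k, M i k = M j k) :
    Gc M (σ * Equiv.swap i j)
      = (cycFac M σ i * cycFac M σ j).re
        * ∏ x ∈ ((maxes σ).erase (theMax σ i)).erase (theMax σ j), (cycFac M σ x).re := by
  rcases lt_trichotomy (theMax σ j) (theMax σ i) with hlt | heq | hgt
  · exact m_Gc_main hij hsep hr hlt
  · exact absurd heq.symm (theMax_ne hsep)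
  · have := m_Gc_main (i := j) (j := i) hij.symm (fun h => hsep h.symm)
      (fun k => (hr k).symm) hgt
    rw [Equiv.swap_comm j i] at this
    rw [this, Finset.erase_right_comm, re_mul_comm]

end Part7

section Part8
/-! ### final assembly -/

open scoped Classical

variable {n : ℕ}

lemma swap_toggles_aux {i j : Fin n} (hij : i ≠ j) (σ : Equiv.Perm (Fin n))
    (hSC : σ.SameCycle i j) : ¬(σ * Equiv.swap i j).SameCycle i j := by
  set ρ := σ * Equiv.swap i j with hρ
  have hex : ∃ t, (σ ^ (t + 1)) i = j := by
    obtain ⟨t, ht⟩ := sameCycle_exists_pow σ hSC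
    match t, ht with
    | 0, ht => exact absurd (by simpa using ht) hij
    | (t + 1), ht => exact ⟨t, ht⟩
  set c := Nat.find hex + 1 with hcdef
  have hc : (σ ^ c) i = j := Nat.find_spec hex
  have hmin : ∀ u, 1 ≤ u → u < c → (σ ^ u) i ≠ j := by
    intro u h1 h2 h
    exact Nat.find_min hex (m := u - 1) (by omega)
      (by rw [show u - 1 + 1 = u from by omega]; exact h)
  have hne_i : ∀ u, 1 ≤ u → u < c → (σ ^ u) i ≠ i := by
    intro u h1 h2 h
    apply hmin (c - u) (by omega) (by omega)
    calc (σ ^ (c - u)) i = (σ ^ (c - u)) ((σ ^ u) i) := by rw [h]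
      _ = (σ ^ (c - u + u)) i := by rw [← Equiv.Perm.mul_apply, ← pow_add]
      _ = j := by rw [show c - u + u = c from by omega, hc]
  have horb : ∀ t, 1 ≤ t → t ≤ c → (ρ ^ t) j = (σ ^ t) i := by
    intro t
    induction t with
    | zero => omega
    | succ t ih =>
      intro _ hta
      by_cases ht0 : t = 0
      · subst ht0
        simp [hρ, Equiv.Perm.mul_apply, Equiv.swap_apply_right]
      · have ih' := ih (by omega) (by omega)
        rw [pow_succ', Equiv.Perm.mul_apply, ih', hρ, Equiv.Perm.mul_apply,
          Equiv.swap_apply_of_ne_of_ne (hne_i t (by omega) (by omega))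
            (hmin t (by omega) (by omega)),
          pow_succ', Equiv.Perm.mul_apply]
  have hperiod : (ρ ^ c) j = j := by
    rw [horb c (by omega) le_rfl, hc]
  intro h
  obtain ⟨t, ht⟩ := sameCycle_exists_pow ρ h.symm
  rw [pow_mod_apply ρ hperiod t] at ht
  set r := t % c with hr'
  have hrlt : r < c := Nat.mod_lt _ (by omega)
  by_cases hr0 : r = 0
  · rw [hr0, pow_zero, Equiv.Perm.one_apply] at ht
    exact hij ht.symm
  · rw [horb r (by omega) (by omega)] at ht
    exact hne_i r (by omega) hrlt ht

lemma swap_toggles {i j : Fin n} (hij : i ≠ j) (σ : Equiv.Perm (Fin n)) :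
    (σ * Equiv.swap i j).SameCycle i j ↔ ¬σ.SameCycle i j := by
  constructor
  · intro h hcon
    exact swap_toggles_aux hij σ hcon h
  · intro h
    have h1 : ((σ * Equiv.swap i j) ^ (per σ i)) j = i := by
      rw [m_orbit1 hij h (per σ i) (per_pos σ i) le_rfl, pow_per_apply]
    exact (sameCycle_of_pow _ h1).symm

lemma swap_swap_cancel {i j : Fin n} (σ : Equiv.Perm (Fin n)) :
    (σ * Equiv.swap i j) * Equiv.swap i j = σ := by
  rw [mul_assoc, Equiv.swap_mul_self, mul_one]

lemma core {M : Matrix (Fin n) (Fin n) HC} (hM : IsSelfAdjointQ M) {i j : Fin n} (hij : i ≠ j)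
    (hr : ∀ k, M i k = M j k) : Qdet M = 0 := by
  rw [claim1 M hM i]
  suffices h : (∑ σ : Equiv.Perm (Fin n), ((Equiv.Perm.sign σ : ℤ) : ℂ) * Gc M σ) = 0 by
    rw [h]
    simp
  set τ := Equiv.swap i j with hτ
  set F : Equiv.Perm (Fin n) → ℂ := fun σ => ((Equiv.Perm.sign σ : ℤ) : ℂ) * Gc M σ with hF
  set sep : Finset (Equiv.Perm (Fin n)) :=
    Finset.univ.filter (fun σ => ¬σ.SameCycle i j) with hsepdef
  set mer : Finset (Equiv.Perm (Fin n)) :=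
    Finset.univ.filter (fun σ => σ.SameCycle i j) with hmerdef
  have hsplit : ∑ σ : Equiv.Perm (Fin n), F σ = (∑ σ ∈ mer, F σ) + ∑ σ ∈ sep, F σ :=
    (Finset.sum_filter_add_sum_filter_not _ _ F).symm
  have hmem_sep : ∀ σ, σ ∈ sep ↔ ¬σ.SameCycle i j := by
    intro σ; simp [hsepdef]
  have hmem_mer : ∀ σ, σ ∈ mer ↔ σ.SameCycle i j := by
    intro σ; simp [hmerdef]
  have hbij : ∑ σ ∈ mer, F σ = ∑ σ ∈ sep, F (σ * τ) := by
    apply Finset.sum_nbij' (i := fun σ => σ * τ) (j := fun σ => σ * τ)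
    · intro a ha
      rw [hmem_sep]
      intro hcon
      rw [hmem_mer] at ha
      have := (swap_toggles hij (a * τ)).mpr
      rw [swap_swap_cancel] at this
      exact swap_toggles_aux hij a ha hcon
    · intro a ha
      rw [hmem_mer]
      exact (swap_toggles hij a).mpr ((hmem_sep a).mp ha)
    · intro a _; exact swap_swap_cancel a
    · intro a _; exact swap_swap_cancel a
    · intro a _
      rw [swap_swap_cancel]
  have hrev : ∑ σ ∈ sep, F (revAt σ j * τ) = ∑ σ ∈ sep, F (σ * τ) := by
    apply Finset.sum_nbij' (i := fun σ => revAt σ j) (j := fun σ => revAt σ j)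
    · intro a ha
      rw [hmem_sep] at ha ⊢
      rwa [sameCycle_revAt]
    · intro a ha
      rw [hmem_sep] at ha ⊢
      rwa [sameCycle_revAt]
    · intro a _; exact revAt_revAt a j
    · intro a _; exact revAt_revAt a j
    · intro a _; rfl
  have hkey : ∀ σ ∈ sep, F (σ * τ) + F (revAt σ j * τ) = -(2 * F σ) := by
    intro σ hσ
    have hsep : ¬σ.SameCycle i j := (hmem_sep σ).mp hσ
    set σ' := revAt σ j with hσ'
    have hsep' : ¬σ'.SameCycle i j := by rwa [hσ', sameCycle_revAt]
    have hsign1 : ((Equiv.Perm.sign (σ * τ) : ℤ) : ℂ) = -((Equiv.Perm.sign σ : ℤ) : ℂ) := by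
      rw [hτ, _root_.map_mul, Equiv.Perm.sign_swap hij]
      push_cast
      ring
    have hsign2 : ((Equiv.Perm.sign (σ' * τ) : ℤ) : ℂ) = -((Equiv.Perm.sign σ : ℤ) : ℂ) := by
      rw [hτ, _root_.map_mul, Equiv.Perm.sign_swap hij, hσ', sign_revAt]
      push_cast
      ring
    have hGc1 := m_GcA hij hsep hr
    have hGc2 := m_GcA (σ := σ') hij hsep' hr
    -- rewrite the σ' quantities in terms of σ
    have hci : cycFac M σ' i = cycFac M σ i :=
      cycFac_revAt_off M σ (fun h => hsep h.symm)
    have hcj : cycFac M σ' j = star (cycFac M σ j) := cycFac_revAt_on M hM σ j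
    have hmaxes : maxes σ' = maxes σ := maxes_revAt σ j
    have hmi : theMax σ' i = theMax σ i := theMax_congr (sameCycle_revAt σ j) i
    have hmj : theMax σ' j = theMax σ j := theMax_congr (sameCycle_revAt σ j) j
    have hprod : ∏ x ∈ ((maxes σ').erase (theMax σ' i)).erase (theMax σ' j),
          (cycFac M σ' x).re
        = ∏ x ∈ ((maxes σ).erase (theMax σ i)).erase (theMax σ j), (cycFac M σ x).re := by
      rw [hmaxes, hmi, hmj]
      apply Finset.prod_congr rfl
      intro x hx
      have hx1 : x ∈ maxes σ := Finset.mem_of_mem_erase (Finset.mem_of_mem_erase hx)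
      have hxnj : x ≠ theMax σ j := (Finset.mem_erase.mp hx).1
      rw [hσ', cycFac_revAt_off M σ (not_sameCycle_of_ne_theMax hx1 hxnj)]
    rw [hF]
    simp only
    rw [hsign1, hsign2, hGc1, hGc2, hci, hcj, hprod, m_Gc_base hsep]
    set P := ∏ x ∈ ((maxes σ).erase (theMax σ i)).erase (theMax σ j), (cycFac M σ x).re
    have := re_mul_add_re_mul_star (cycFac M σ i) (cycFac M σ j)
    linear_combination (-((Equiv.Perm.sign σ : ℤ) : ℂ) * P) * this
  have hS1 : ∑ σ : Equiv.Perm (Fin n), F σ = ∑ σ ∈ sep, (F (σ * τ) + F σ) := by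
    rw [hsplit, hbij, Finset.sum_add_distrib]
  have hS2 : ∑ σ : Equiv.Perm (Fin n), F σ = ∑ σ ∈ sep, (F (revAt σ j * τ) + F σ) := by
    rw [hsplit, hbij, ← hrev, Finset.sum_add_distrib]
  have h2S : 2 * ∑ σ : Equiv.Perm (Fin n), F σ = 0 := by
    rw [two_mul]
    nth_rewrite 1 [hS1]
    rw [hS2, ← Finset.sum_add_distrib]
    apply Finset.sum_eq_zero
    intro σ hσ
    have := hkey σ hσ
    linear_combination this
  have := mul_eq_zero.mp h2S
  rcases this with h | h
  · norm_num at h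
  · exact h

end Part8


/-- if `M` is a self-adjoint `n × n` matrix over `ℍ_ℂ` and two distinct columns
of `M` are equal then `Qdet M = 0`; the same holds if two distinct rows of `M` are equal. -/
theorem statement5 (n : ℕ) (M : Matrix (Fin n) (Fin n) HC) (hM : IsSelfAdjointQ M)
    (i j : Fin n) (hij : i ≠ j) :
    ((∀ k, M k i = M k j) → Qdet M = 0) ∧ ((∀ k, M i k = M j k) → Qdet M = 0) := by
  constructor
  · intro hc
    have hr : ∀ k, M i k = M j k := fun k => by rw [hM i k, hM j k, hc k]
    exact core hM hij hr
  · intro hr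
    exact core hM hij hr
end

section
/- Let T be a self-adjoint n×n matrix over ℍ_ℂ and let a₁, …, a_n be complex numbers (viewed as scalars in ℍ_ℂ). Then the matrix [a_i T_{ij} a_j]_{i,j=1}^n is self-adjoint and Qdet[a_i T_{ij} a_j]_{i,j=1}^n = (Π_{i=1}^n a_i²) · Qdet T. -/
open Quaternion Matrix

section Aux

variable {n : ℕ} (σ : Equiv.Perm (Fin n))

theorem listPull {ι : Type*} (g : ι → ℂ) (h : ι → HC) (L : List ι) :
    (L.map (fun t => g t • h t)).prod = (L.map g).prod • (L.map h).prod := by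
  induction L with
  | nil => simp
  | cons x xs ih => simp [ih, smul_mul_smul_comm, smul_smul, mul_comm]

theorem listToFinset (m : ℕ) (F : Finset (Fin m)) (w : Fin m → ℂ) :
    (((F.sort (· ≤ ·)).reverse).map w).prod = ∏ x ∈ F, w x := by
  rw [(((F.sort (· ≤ ·)).reverse_perm.trans (F.sort_perm_toList (· ≤ ·))).map w).prod_eq,
    Finset.prod_eq_multiset_prod, ← Finset.coe_toList, Multiset.map_coe, Multiset.prod_coe]

theorem pow_ord_apply (x : Fin n) : (σ ^ orderOf (σ.cycleOf x)) x = x := by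
  have := σ.pow_mod_orderOf_cycleOf_apply (orderOf (σ.cycleOf x)) x
  rw [Nat.mod_self, pow_zero, Equiv.Perm.one_apply] at this
  exact this.symm

theorem exists_pow_lt' {x y : Fin n} (h : σ.SameCycle x y) :
    ∃ t < orderOf (σ.cycleOf x), (σ ^ t) x = y := by
  obtain ⟨i, _, rfl⟩ := h.exists_pow_eq'
  exact ⟨i % orderOf (σ.cycleOf x), Nat.mod_lt _ (orderOf_pos _),
    σ.pow_mod_orderOf_cycleOf_apply i x⟩

theorem pow_apply_inj (x : Fin n) {t u : ℕ} (ht : t < orderOf (σ.cycleOf x))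
    (hu : u < orderOf (σ.cycleOf x)) (h : (σ ^ t) x = (σ ^ u) x) : t = u := by
  by_cases hx : σ x = x
  · have h1 : σ.cycleOf x = 1 := (Equiv.Perm.cycleOf_eq_one_iff σ).mpr hx
    rw [h1, orderOf_one] at ht hu
    omega
  · have hc := σ.isCycleOn_support_cycleOf x
    have hxmem : x ∈ (σ.cycleOf x).support :=
      Equiv.Perm.mem_support_cycleOf_iff.2 ⟨Equiv.Perm.SameCycle.refl _ _,
        Equiv.Perm.mem_support.2 hx⟩
    have hcard : (σ.cycleOf x).support.card = orderOf (σ.cycleOf x) :=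
      ((Equiv.Perm.isCycle_cycleOf σ hx).orderOf).symm
    have h2 := (hc.pow_apply_eq_pow_apply hxmem).1 h
    rw [hcard] at h2
    rwa [Nat.ModEq, Nat.mod_eq_of_lt ht, Nat.mod_eq_of_lt hu] at h2

open scoped Classical in
noncomputable def reps : Finset (Fin n) :=
  Finset.univ.filter (fun x : Fin n => ∀ y : Fin n, σ.SameCycle x y → y ≤ x)

open scoped Classical in
noncomputable def cycRep (y : Fin n) : Fin n :=
  (Finset.univ.filter (fun z => σ.SameCycle y z)).max' ⟨y, Finset.mem_filter.2 ⟨Finset.mem_univ _, Equiv.Perm.SameCycle.refl _ _⟩⟩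

open scoped Classical in
theorem sameCycle_cycRep (y : Fin n) : σ.SameCycle y (cycRep σ y) := by
  have := (Finset.univ.filter (fun z => σ.SameCycle y z)).max'_mem
    ⟨y, Finset.mem_filter.2 ⟨Finset.mem_univ _, Equiv.Perm.SameCycle.refl _ _⟩⟩
  exact (Finset.mem_filter.1 this).2

open scoped Classical in
theorem cycRep_mem (y : Fin n) : cycRep σ y ∈ reps σ := by
  rw [reps, Finset.mem_filter]
  refine ⟨Finset.mem_univ _, fun z hz => ?_⟩
  have hyz : σ.SameCycle y z := (sameCycle_cycRep σ y).trans hz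
  exact Finset.le_max' _ z (by simp [hyz])

open scoped Classical in
theorem cycRep_eq {x y : Fin n} (hx : x ∈ reps σ) (hxy : σ.SameCycle x y) :
    cycRep σ y = x := by
  rw [reps, Finset.mem_filter] at hx
  refine le_antisymm (hx.2 _ (hxy.trans (sameCycle_cycRep σ y))) ?_
  exact Finset.le_max' _ x (by simp [hxy.symm])

open scoped Classical in
theorem prod_cycles (a : Fin n → ℂ) :
    ∏ x ∈ reps σ, ∏ t ∈ Finset.range (orderOf (σ.cycleOf x)), a ((σ ^ t) x) = ∏ i, a i := by
  rw [← Finset.prod_fiberwise_of_maps_to (g := cycRep σ) (fun y _ => cycRep_mem σ y) a]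
  refine Finset.prod_congr rfl fun x hx => ?_
  refine Finset.prod_bij (fun t _ => (σ ^ t) x) ?_ ?_ ?_ ?_
  · intro t ht
    simp only [Finset.mem_filter, Finset.mem_univ, true_and]
    exact cycRep_eq σ hx ⟨t, by simp⟩
  · intro t ht u hu h
    exact pow_apply_inj σ x (Finset.mem_range.1 ht) (Finset.mem_range.1 hu) h
  · intro y hy
    simp only [Finset.mem_filter, Finset.mem_univ, true_and] at hy
    have hxy : σ.SameCycle x y := by
      rw [← hy]
      exact (sameCycle_cycRep σ y).symm
    obtain ⟨t, ht, h⟩ := exists_pow_lt' σ hxy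
    exact ⟨t, Finset.mem_range.2 ht, h⟩
  · intro t _
    rfl

theorem cycFac_smul (M : Matrix (Fin n) (Fin n) HC) (a : Fin n → ℂ) (x : Fin n) :
    cycFac (fun i j => algebraMap ℂ HC (a i) * M i j * algebraMap ℂ HC (a j)) σ x
      = ((∏ t ∈ Finset.range (orderOf (σ.cycleOf x)), a ((σ ^ t) x)) ^ 2) • cycFac M σ x := by
  have h1 : ∀ (i j : Fin n) (X : HC),
      algebraMap ℂ HC (a i) * X * algebraMap ℂ HC (a j) = (a i * a j) • X := by
    intro i j X
    rw [mul_assoc, ← Algebra.commutes (a j) X, ← mul_assoc, ← _root_.map_mul, ← Algebra.smul_def]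
  unfold cycFac
  simp_rw [h1]
  rw [listPull]
  congr 1
  have hL : ∀ f : ℕ → ℂ, ((List.range (orderOf (σ.cycleOf x))).map f).prod
      = ∏ t ∈ Finset.range (orderOf (σ.cycleOf x)), f t := fun f => rfl
  simp only [hL, Finset.prod_mul_distrib, sq]
  congr 1
  rcases Nat.eq_zero_or_pos (orderOf (σ.cycleOf x)) with h0 | h0
  · simp [h0]
  · obtain ⟨m, hm⟩ := Nat.exists_eq_succ_of_ne_zero h0.ne'
    rw [hm, Finset.prod_range_succ, Finset.prod_range_succ']
    congr 1
    rw [pow_zero, Equiv.Perm.one_apply, show m + 1 = orderOf (σ.cycleOf x) from hm.symm,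
      pow_ord_apply]

open scoped Classical in
theorem permFac_smul (M : Matrix (Fin n) (Fin n) HC) (a : Fin n → ℂ) :
    permFac (fun i j => algebraMap ℂ HC (a i) * M i j * algebraMap ℂ HC (a j)) σ
      = (∏ i, (a i) ^ 2) • permFac M σ := by
  unfold permFac
  rw [show cycFac (fun i j => algebraMap ℂ HC (a i) * M i j * algebraMap ℂ HC (a j)) σ
      = fun x => ((∏ t ∈ Finset.range (orderOf (σ.cycleOf x)), a ((σ ^ t) x)) ^ 2) • cycFac M σ x
    from funext (cycFac_smul σ M a)]
  rw [listPull, listToFinset]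
  congr 1
  rw [show (Finset.univ.filter (fun x : Fin n => ∀ y : Fin n, σ.SameCycle x y → y ≤ x)) = reps σ
    from rfl]
  rw [Finset.prod_pow, Finset.prod_pow, prod_cycles σ a]

end Aux

/-- for a self-adjoint `n × n` matrix `T` over `ℍ_ℂ` and complex numbers
`a₁, …, a_n` (viewed as scalars in `ℍ_ℂ`), the matrix `[a_i T_{ij} a_j]` is self-adjoint and
`Qdet [a_i T_{ij} a_j] = (Π_i a_i²) Qdet T`. -/
theorem statement17 (n : ℕ) (T : Matrix (Fin n) (Fin n) HC) (hT : IsSelfAdjointQ T)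
    (a : Fin n → ℂ) :
    IsSelfAdjointQ (fun i j => algebraMap ℂ HC (a i) * T i j * algebraMap ℂ HC (a j)) ∧
    Qdet (fun i j => algebraMap ℂ HC (a i) * T i j * algebraMap ℂ HC (a j)) =
      algebraMap ℂ HC (∏ i, (a i) ^ 2) * Qdet T := by
  constructor
  · intro i j
    dsimp only
    rw [hT i j]
    simp [StarMul.star_mul, mul_assoc, QuaternionAlgebra.coe_algebraMap]
  · unfold Qdet
    rw [Algebra.smul_def (∏ i, (a i) ^ 2) (∑ σ : Equiv.Perm (Fin n),
      ((Equiv.Perm.sign σ : ℤ) : HC) * permFac T σ) |>.symm, Finset.smul_sum]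
    refine Finset.sum_congr rfl fun σ _ => ?_
    rw [permFac_smul, mul_smul_comm]
end

section
/- Let K be a self-adjoint n×n matrix over ℍ_ℂ, let g₁, …, g_n be nonnegative real numbers, and let G = diag(g₁, …, g_n) and √G = diag(√g₁, …, √g_n), regarded as diagonal matrices over ℍ_ℂ with complex-scalar entries. If the matrix I + (G − I)K is invertible, then the matrix K^g := √G · K · (I + (G − I)K)⁻¹ · √G is self-adjoint; in particular one has the identity K(I + (G − I)K)⁻¹ = (I + K(G − I))⁻¹K. -/
open Quaternion Matrix

set_option maxHeartbeats 1000000 in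
/-- let `K` be a self-adjoint `n × n` matrix over `ℍ_ℂ`, `g₁, …, g_n ≥ 0` real,
`G = diag(g₁, …, g_n)` and `√G = diag(√g₁, …, √g_n)` (diagonal matrices over `ℍ_ℂ` with
complex-scalar entries). If `I + (G − I)K` is invertible then
`K^g := √G ⬝ K (I + (G − I)K)⁻¹ √G` is self-adjoint; in particular
`K (I + (G − I)K)⁻¹ = (I + K(G − I))⁻¹ K`. -/
theorem statement18 (n : ℕ) (K : Matrix (Fin n) (Fin n) HC) (hK : IsSelfAdjointQ K)
    (g : Fin n → ℝ) (hg : ∀ i, 0 ≤ g i) :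
    let G : Matrix (Fin n) (Fin n) HC := Matrix.diagonal (fun i => algebraMap ℂ HC (g i : ℂ))
    let sG : Matrix (Fin n) (Fin n) HC :=
      Matrix.diagonal (fun i => algebraMap ℂ HC (Real.sqrt (g i) : ℂ))
    IsUnit (1 + (G - 1) * K) →
      IsSelfAdjointQ (sG * (K * Ring.inverse (1 + (G - 1) * K)) * sG) ∧
      K * Ring.inverse (1 + (G - 1) * K) = Ring.inverse (1 + K * (G - 1)) * K := by
  intro G sG hA
  have hKs : star K = K := by
    refine Matrix.ext fun i j => ?_
    simpa [Matrix.star_apply] using (hK i j).symm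
  have hdiag : ∀ f : Fin n → ℝ,
      star (Matrix.diagonal (fun i => algebraMap ℂ HC (f i : ℂ))) =
        Matrix.diagonal (fun i => algebraMap ℂ HC (f i : ℂ)) := by
    intro f
    rw [Matrix.star_eq_conjTranspose, Matrix.diagonal_conjTranspose]
    refine congrArg Matrix.diagonal (funext fun i => ?_)
    simp only [Pi.star_apply, QuaternionAlgebra.coe_algebraMap,
      QuaternionAlgebra.star_coe]
  have hGs : star G = G := hdiag g
  have hsGs : star sG = sG := hdiag fun i => Real.sqrt (g i)
  set A : Matrix (Fin n) (Fin n) HC := 1 + (G - 1) * K with hAdef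
  set B : Matrix (Fin n) (Fin n) HC := 1 + K * (G - 1) with hBdef
  have hstarA : star A = B := by
    rw [hAdef, hBdef, star_add, star_one, Matrix.star_mul, hKs, star_sub, star_one, hGs]
  have hB : IsUnit B := hstarA ▸ hA.star
  have hcomm : B * K = K * A := by
    rw [hAdef, hBdef, add_mul, one_mul, mul_add, mul_one, mul_assoc]
  have key : K * Ring.inverse A = Ring.inverse B * K := by
    have h1 : Ring.inverse B * B = 1 := Ring.inverse_mul_cancel B hB
    have h2 : A * Ring.inverse A = 1 := Ring.mul_inverse_cancel A hA
    calc K * Ring.inverse A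
        = (Ring.inverse B * B) * (K * Ring.inverse A) := by rw [h1, one_mul]
      _ = Ring.inverse B * (K * (A * Ring.inverse A)) := by
          rw [mul_assoc, ← mul_assoc B, hcomm, mul_assoc]
      _ = Ring.inverse B * K := by rw [h2, mul_one]
  refine ⟨?_, key⟩
  have e1 : star (K * Ring.inverse A) = K * Ring.inverse A := by
    rw [Matrix.star_mul, ← Ring.inverse_star, hstarA, hKs]
    exact key.symm
  have hX : star (sG * (K * Ring.inverse A) * sG) = sG * (K * Ring.inverse A) * sG := by
    rw [Matrix.star_mul, Matrix.star_mul, hsGs, e1, ← mul_assoc]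
  intro i j
  have h2 := Matrix.ext_iff.mpr hX i j
  simpa [Matrix.star_apply] using h2.symm
end
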